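/- arXiv:math/0601328 — 3 statements merged into one kernel-verified Lean document; each statement's English description precedes it below -/
import Mathlib

section
/- Let M be a left divisibility monoid and h : M → H the map sending each element to its maximal right-dividing hypercube. Then h(ab) = h(h(a)b) for all a, b in M. -/
section Defs
variable {M : Type*} [Monoid M]

/-- `a` left-divides `b` (`b` is a right multiple of `a`). -/
def LDvd (a b : M) : Prop := ∃ d, b = a * d

/-- `a` right-divides `b` (`b` is a left multiple of `a`). -/
def RDvd (a b : M) : Prop := ∃ d, b = d * a

/-- `a` is an irreducible element of the monoid. -/
def IsIrred (a : M) : Prop := a ≠ 1 ∧ ∀ b c, a = b * c → b = 1 ∨ c = 1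

/-- `c` is a right lcm of `a` and `b`. -/
def IsRightLcm (a b c : M) : Prop :=
  LDvd a c ∧ LDvd b c ∧ ∀ m, LDvd a m → LDvd b m → LDvd c m

/-- `c` is a right lcm of the set `s`. -/
def IsRightLcmSet (s : Set M) (c : M) : Prop :=
  (∀ x ∈ s, LDvd x c) ∧ ∀ m, (∀ x ∈ s, LDvd x m) → LDvd c m

/-- A hypercube: a right lcm of a finite set of irreducible elements. -/
def IsHypercube (h : M) : Prop :=
  ∃ s : Finset M, (∀ x ∈ s, IsIrred x) ∧ IsRightLcmSet (↑s) h

/-- `h` is the maximal hypercube right-dividing `a`. -/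
def IsMaxHC (a h : M) : Prop :=
  IsHypercube h ∧ RDvd h a ∧ ∀ k, IsHypercube k → RDvd k a → RDvd k h

/-- The list `L = [h_p, …, h_1]` of nontrivial hypercubes is a right normal form:
`h_i` is the maximal hypercube right-dividing `h_p ⋯ h_i`. -/
def IsRNF (hmap : M → M) (L : List M) : Prop :=
  (∀ x ∈ L, IsHypercube x ∧ x ≠ 1) ∧
  ∀ n (hn : n < L.length), hmap ((L.take (n + 1)).prod) = L.get ⟨n, hn⟩

end Defs

/-- A left divisibility monoid: cancellative, generated by its finitely many
irreducibles, any two elements have a left gcd, and every set of left divisors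
is a finite distributive lattice under left divisibility. -/
def IsLDM (M : Type*) [Monoid M] : Prop :=
  (∀ a b c : M, a * b = a * c → b = c) ∧
  (∀ a b c : M, b * a = c * a → b = c) ∧
  (∃ S : Finset M, (∀ x ∈ S, IsIrred x) ∧ Submonoid.closure (S : Set M) = ⊤) ∧
  (∀ a b : M, ∃ g, LDvd g a ∧ LDvd g b ∧ ∀ c, LDvd c a → LDvd c b → LDvd c g) ∧
  (∀ a : M, {b : M | LDvd b a}.Finite) ∧
  (∀ a : M, ∃ i : DistribLattice {b : M // LDvd b a},
      ∀ x y : {b : M // LDvd b a}, i.le x y ↔ LDvd x.1 y.1)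

namespace LDMaux

variable {M : Type*} [Monoid M]

theorem ldvd_refl (a : M) : LDvd a a := ⟨1, (mul_one a).symm⟩
theorem one_ldvd (a : M) : LDvd 1 a := ⟨a, (one_mul a).symm⟩
theorem ldvd_trans {a b c : M} (h1 : LDvd a b) (h2 : LDvd b c) : LDvd a c := by
  obtain ⟨d, rfl⟩ := h1; obtain ⟨e, rfl⟩ := h2; exact ⟨d * e, mul_assoc _ _ _⟩
theorem rdvd_refl (a : M) : RDvd a a := ⟨1, (one_mul a).symm⟩
theorem rdvd_trans {a b c : M} (h1 : RDvd a b) (h2 : RDvd b c) : RDvd a c := by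
  obtain ⟨d, rfl⟩ := h1; obtain ⟨e, rfl⟩ := h2; exact ⟨e * d, (mul_assoc _ _ _).symm⟩
theorem mul_ldvd_mul (a : M) {u v : M} (h : LDvd u v) : LDvd (a * u) (a * v) := by
  obtain ⟨d, rfl⟩ := h; exact ⟨d, (mul_assoc _ _ _).symm⟩
theorem ldvd_mul_self (a u : M) : LDvd a (a * u) := ⟨u, rfl⟩

theorem unit_eq_one (hM : IsLDM M) {u v : M} (h : u * v = 1) : u = 1 ∧ v = 1 := by
  obtain ⟨i, hi⟩ := hM.2.2.2.2.2 (1 : M)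
  letI := i
  have hu : LDvd u 1 := ⟨v, h.symm⟩
  have e : (⟨u, hu⟩ : {b : M // LDvd b 1}) = ⟨1, ldvd_refl 1⟩ := by
    apply le_antisymm
    · exact (hi _ _).mpr hu
    · exact (hi _ _).mpr (one_ldvd u)
  have hu1 : u = 1 := congrArg Subtype.val e
  exact ⟨hu1, by rwa [hu1, one_mul] at h⟩

theorem ldvd_antisymm (hM : IsLDM M) {a b : M} (h1 : LDvd a b) (h2 : LDvd b a) : a = b := by
  obtain ⟨d, rfl⟩ := h1
  obtain ⟨e, he⟩ := h2
  have : a * (d * e) = a * 1 := by rw [mul_one, ← mul_assoc]; exact he.symm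
  have hde := hM.1 _ _ _ this
  rw [(unit_eq_one hM hde).1, mul_one]

theorem rdvd_antisymm (hM : IsLDM M) {a b : M} (h1 : RDvd a b) (h2 : RDvd b a) : a = b := by
  obtain ⟨d, rfl⟩ := h1
  obtain ⟨e, he⟩ := h2
  have : (e * d) * a = 1 * a := by rw [one_mul, mul_assoc]; exact he.symm
  have hde := hM.2.1 _ _ _ this
  rw [(unit_eq_one hM hde).2, one_mul]

theorem ldvd_cancel (hM : IsLDM M) {a u v : M} (h : LDvd (a * u) (a * v)) : LDvd u v := by
  obtain ⟨d, hd⟩ := h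
  exact ⟨d, hM.1 a _ _ (by rw [← mul_assoc]; exact hd)⟩

theorem ldvd_irred {y u : M} (hy : IsIrred y) (h : LDvd u y) : u = 1 ∨ u = y := by
  obtain ⟨t, ht⟩ := h
  rcases hy.2 u t ht with h1 | h1
  · exact Or.inl h1
  · right; rw [ht, h1, mul_one]

theorem eq_one_or_irred_factor (hM : IsLDM M) (g : M) :
    g = 1 ∨ ∃ y r, IsIrred y ∧ g = y * r := by
  obtain ⟨S, hS, hScl⟩ := hM.2.2.1
  have hg : g ∈ Submonoid.closure (S : Set M) := by rw [hScl]; exact Submonoid.mem_top g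
  obtain ⟨l, hl, rfl⟩ := Submonoid.exists_list_of_mem_closure hg
  cases l with
  | nil => exact Or.inl rfl
  | cons y t =>
      right
      exact ⟨y, t.prod, hS y (hl y (List.mem_cons_self)), List.prod_cons⟩

/-- `d` is the join of its irreducible left divisors. -/
def MaxP (d : M) : Prop :=
  ∀ g, LDvd g d → (∀ y, IsIrred y → LDvd y d → LDvd y g) → LDvd d g

theorem maxP_of_hypercube {k : M} (hk : IsHypercube k) : MaxP k := by
  obtain ⟨T, hTi, hTl⟩ := hk
  intro g _ H
  exact hTl.2 g (fun y hy => H y (hTi y hy) (hTl.1 y hy))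

theorem hypercube_of_maxP (hM : IsLDM M) {d : M} (hP : MaxP d) : IsHypercube d := by
  have hfin : {y : M | IsIrred y ∧ LDvd y d}.Finite :=
    (hM.2.2.2.2.1 d).subset (fun y hy => hy.2)
  refine ⟨hfin.toFinset, ?_, ?_, ?_⟩
  · intro y hy
    exact ((hfin.mem_toFinset).mp hy).1
  · intro y hy
    have : y ∈ hfin.toFinset := hy
    exact ((hfin.mem_toFinset).mp this).2
  · intro m hm
    obtain ⟨g, hgm, hgd, hgG⟩ := hM.2.2.2.1 m d
    refine ldvd_trans (hP g hgd ?_) hgm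
    intro y hy hyd
    exact hgG y (hm y (by simpa [hfin.mem_toFinset] using And.intro hy hyd)) hyd

end LDMaux

namespace LDMaux

section ListSup
variable {α : Type*}

theorem le_listSup [SemilatticeSup α] (b : α) (l : List α) {x : α} (hx : x ∈ l) :
    x ≤ l.foldr (· ⊔ ·) b := by
  induction l with
  | nil => cases hx
  | cons y t ih =>
      rcases List.mem_cons.mp hx with rfl | hx
      · exact le_sup_left
      · exact le_trans (ih hx) le_sup_right

theorem listSup_le [SemilatticeSup α] {b c : α} {l : List α} (hb : b ≤ c)
    (h : ∀ x ∈ l, x ≤ c) : l.foldr (· ⊔ ·) b ≤ c := by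
  induction l with
  | nil => exact hb
  | cons y t ih =>
      exact sup_le (h y (List.mem_cons_self)) (ih (fun x hx => h x (List.mem_cons_of_mem y hx)))

theorem inf_listSup [DistribLattice α] (a b : α) (l : List α) :
    a ⊓ l.foldr (· ⊔ ·) b = (l.map (a ⊓ ·)).foldr (· ⊔ ·) (a ⊓ b) := by
  induction l with
  | nil => rfl
  | cons y t ih => simp only [List.foldr, List.map, inf_sup_left, ih]

end ListSup

variable {M : Type*} [Monoid M]

theorem maxP_of_ldvd_hypercube (hM : IsLDM M) {k d : M} (hk : IsHypercube k)
    (hdk : LDvd d k) : MaxP d := by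
  obtain ⟨T, hTi, hTub, hTleast⟩ := hk
  intro g hgd H
  obtain ⟨i, hi⟩ := hM.2.2.2.2.2 k
  letI := i
  have hle : ∀ x y : {b : M // LDvd b k}, x ≤ y ↔ LDvd x.1 y.1 := hi
  let bot : {b : M // LDvd b k} := ⟨1, one_ldvd k⟩
  let lT : List {b : M // LDvd b k} :=
    List.pmap (fun y (hy : y ∈ T) => (⟨y, hTub y hy⟩ : {b : M // LDvd b k})) T.toList
      (fun a ha => Finset.mem_toList.mp ha)
  let S : {b : M // LDvd b k} := lT.foldr (· ⊔ ·) bot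
  have hmemle : ∀ y ∈ T, LDvd y S.1 := by
    intro y hy
    have hmem : (⟨y, hTub y hy⟩ : {b : M // LDvd b k}) ∈ lT :=
      List.mem_pmap.mpr ⟨y, Finset.mem_toList.mpr hy, rfl⟩
    exact (hle _ _).mp (le_listSup bot lT hmem)
  have hkS : LDvd k S.1 := hTleast S.1 (fun y hy => hmemle y hy)
  have hSk : S.1 = k := ldvd_antisymm hM S.2 hkS
  have hgk : LDvd g k := ldvd_trans hgd hdk
  have hdSle : (⟨d, hdk⟩ : {b : M // LDvd b k}) ≤ S := by
    apply (hle _ _).mpr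
    rw [hSk]; exact hdk
  have hdS : (⟨d, hdk⟩ : {b : M // LDvd b k}) ⊓ S = ⟨d, hdk⟩ := inf_eq_left.mpr hdSle
  have key : (⟨d, hdk⟩ : {b : M // LDvd b k}) ⊓ S
      = (lT.map (fun z => (⟨d, hdk⟩ : {b : M // LDvd b k}) ⊓ z)).foldr (· ⊔ ·)
        ((⟨d, hdk⟩ : {b : M // LDvd b k}) ⊓ bot) := inf_listSup _ _ _
  have hfin : (lT.map (fun z => (⟨d, hdk⟩ : {b : M // LDvd b k}) ⊓ z)).foldr (· ⊔ ·)
        ((⟨d, hdk⟩ : {b : M // LDvd b k}) ⊓ bot) ≤ ⟨g, hgk⟩ := by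
    apply listSup_le
    · exact le_trans inf_le_right ((hle bot ⟨g, hgk⟩).mpr (one_ldvd g))
    · intro z hz
      obtain ⟨yy, hyy, rfl⟩ := List.mem_map.mp hz
      obtain ⟨y, hyT, rfl⟩ := List.mem_pmap.mp hyy
      have hyT' : y ∈ T := Finset.mem_toList.mp hyT
      have hzy : LDvd ((⟨d, hdk⟩ : {b : M // LDvd b k}) ⊓ ⟨y, hTub y hyT'⟩).1 y :=
        (hle _ _).mp inf_le_right
      have hzd : LDvd ((⟨d, hdk⟩ : {b : M // LDvd b k}) ⊓ ⟨y, hTub y hyT'⟩).1 d :=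
        (hle _ _).mp inf_le_left
      apply (hle _ _).mpr
      rcases ldvd_irred (hTi y hyT') hzy with h1 | h1
      · rw [h1]; exact one_ldvd g
      · rw [h1]
        exact H y (hTi y hyT') (by rw [← h1]; exact hzd)
  have hfin2 : (⟨d, hdk⟩ : {b : M // LDvd b k}) ≤ ⟨g, hgk⟩ := by
    rw [← hdS, key]; exact hfin
  exact (hle _ _).mp hfin2

end LDMaux

namespace LDMaux
variable {M : Type*} [Monoid M]

/-- Key lemma: if the hypercube `k` right-divides `c*x` with `x` irreducible and the
cofactor `w` does not left-divide `c`, then the cofactor of `gcd w c` in `c` is a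
hypercube. -/
theorem lemB (hM : IsLDM M) {c x w k : M} (hx : IsIrred x) (hk : IsHypercube k)
    (hcx : c * x = w * k) (hwc : ¬ LDvd w c) :
    ∃ w₀ k₀, IsHypercube k₀ ∧ c = w₀ * k₀ ∧ LDvd w₀ w := by
  obtain ⟨w₀, hw₀w, hw₀c, hw₀G⟩ := hM.2.2.2.1 w c
  obtain ⟨s, hs⟩ := hw₀w
  obtain ⟨k₀, hk₀⟩ := hw₀c
  refine ⟨w₀, k₀, ?_, hk₀, ⟨s, hs⟩⟩
  apply hypercube_of_maxP hM
  intro g hg H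
  obtain ⟨i, hi⟩ := hM.2.2.2.2.2 (c * x)
  letI := i
  have hle : ∀ u v : {b : M // LDvd b (c * x)}, u ≤ v ↔ LDvd u.1 v.1 := hi
  have hccx : LDvd c (c * x) := ldvd_mul_self c x
  have hwcx : LDvd w (c * x) := hcx ▸ ldvd_mul_self w k
  have hw₀c' : LDvd w₀ c := ⟨k₀, hk₀⟩
  have hw₀cx : LDvd w₀ (c * x) := ldvd_trans hw₀c' hccx
  set cc : {b : M // LDvd b (c * x)} := ⟨c, hccx⟩ with hcc
  set ww : {b : M // LDvd b (c * x)} := ⟨w, hwcx⟩ with hww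
  set ww0 : {b : M // LDvd b (c * x)} := ⟨w₀, hw₀cx⟩ with hww0
  set top : {b : M // LDvd b (c * x)} := ⟨c * x, ldvd_refl _⟩ with htop
  have hle_top : ∀ z : {b : M // LDvd b (c * x)}, z ≤ top := fun z => (hle _ _).mpr z.2
  -- fact1 : ww ⊓ cc = ww0
  have fact1 : ww ⊓ cc = ww0 := by
    apply le_antisymm
    · exact (hle _ _).mpr (hw₀G _ ((hle _ _).mp inf_le_left) ((hle _ _).mp inf_le_right))
    · exact le_inf ((hle _ _).mpr ⟨s, hs⟩) ((hle _ _).mpr hw₀c')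
  -- fact2 : ww ⊔ cc = top
  have fact2 : ww ⊔ cc = top := by
    obtain ⟨y, hy⟩ := (hle cc (ww ⊔ cc)).mp le_sup_right
    obtain ⟨t, ht⟩ := (ww ⊔ cc).2
    rw [hy, mul_assoc] at ht
    rcases hx.2 y t (hM.1 c _ _ ht) with h1 | h1
    · exfalso
      apply hwc
      have : (ww ⊔ cc) = cc := Subtype.ext (by rw [hy, h1, mul_one])
      have := (hle ww cc).mp (this ▸ le_sup_left)
      exact this
    · apply Subtype.ext
      rw [hy]
      rw [h1, mul_one] at ht
      exact ht.symm
  -- the join j = ⟨w₀*g⟩ ⊔ ww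
  have hw₀g_c : LDvd (w₀ * g) c := by rw [hk₀]; exact mul_ldvd_mul w₀ hg
  have hw₀g : LDvd (w₀ * g) (c * x) := ldvd_trans hw₀g_c hccx
  set gg0 : {b : M // LDvd b (c * x)} := ⟨w₀ * g, hw₀g⟩ with hgg0
  obtain ⟨g', hg'⟩ := (hle ww (gg0 ⊔ ww)).mp le_sup_right
  have hg'k : LDvd g' k := by
    apply ldvd_cancel hM (a := w)
    rw [← hg', ← hcx]
    exact (gg0 ⊔ ww).2
  -- main subclaim : every irreducible divisor of k divides g'
  have sub : ∀ y, IsIrred y → LDvd y k → LDvd y g' := by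
    intro y hy hyk
    have hwy : LDvd (w * y) (c * x) := by rw [hcx]; exact mul_ldvd_mul w hyk
    set mm : {b : M // LDvd b (c * x)} := ⟨w * y, hwy⟩ with hmm
    have hwwm : ww ≤ mm := (hle _ _).mpr (ldvd_mul_self w y)
    have hww0n : ww0 ≤ mm ⊓ cc := le_inf (le_trans ((hle _ _).mpr ⟨s, hs⟩) hwwm) ((hle _ _).mpr hw₀c')
    obtain ⟨z, hz⟩ := (hle ww0 (mm ⊓ cc)).mp hww0n
    have hzk₀ : LDvd z k₀ := by
      apply ldvd_cancel hM (a := w₀)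
      rw [← hz, ← hk₀]
      exact (hle _ _).mp (inf_le_right : mm ⊓ cc ≤ cc)
    -- φ(ψ(mm)) = mm
    have hphipsi : (mm ⊓ cc) ⊔ ww = mm := by
      rw [sup_inf_right, sup_eq_left.mpr hwwm, sup_comm cc ww, fact2]
      exact inf_eq_left.mpr (hle_top mm)
    -- z ≠ 1
    have hzne : z ≠ 1 := by
      intro hz1
      have hn : mm ⊓ cc = ww0 := Subtype.ext (by rw [hz, hz1, mul_one])
      have : mm = ww := by
        rw [← hphipsi, hn, ← fact1, sup_comm, sup_eq_left.mpr inf_le_left]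
      have := congrArg Subtype.val this
      simp only [hmm, hww] at this
      exact hy.1 (hM.1 w _ _ (by rw [this, mul_one]))
    -- z is irreducible
    have hzirr : IsIrred z := by
      refine ⟨hzne, ?_⟩
      intro u t hut
      have hu_n : LDvd (w₀ * u) (w₀ * z) := mul_ldvd_mul w₀ ⟨t, hut⟩
      have hu_cx : LDvd (w₀ * u) (c * x) := ldvd_trans hu_n (hz ▸ (mm ⊓ cc).2)
      set uu0 : {b : M // LDvd b (c * x)} := ⟨w₀ * u, hu_cx⟩ with huu0
      have huu0n : uu0 ≤ mm ⊓ cc := (hle _ _).mpr (hz ▸ hu_n)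
      obtain ⟨u', hu'⟩ := (hle ww (uu0 ⊔ ww)).mp le_sup_right
      have hjum : uu0 ⊔ ww ≤ mm := sup_le (le_trans huu0n inf_le_left) hwwm
      have hu'y : LDvd u' y := by
        apply ldvd_cancel hM (a := w)
        rw [← hu']
        exact (hle _ _).mp hjum
      have huu0cc : uu0 ≤ cc := le_trans huu0n inf_le_right
      rcases ldvd_irred hy hu'y with h1 | h1
      · -- u' = 1 : then uu0 ≤ ww0, so u = 1
        left
        have hjw : uu0 ⊔ ww = ww := Subtype.ext (by rw [hu', h1, mul_one])
        have huu0ww : uu0 ≤ ww := hjw ▸ le_sup_left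
        have : uu0 ≤ ww0 := fact1 ▸ le_inf huu0ww huu0cc
        obtain ⟨e, he⟩ := (hle uu0 ww0).mp this
        have : w₀ * (u * e) = w₀ * 1 := by rw [mul_one, ← mul_assoc]; exact he.symm
        exact (unit_eq_one hM (hM.1 _ _ _ this)).1
      · -- u' = y : then uu0 = mm ⊓ cc, so u = z, t = 1
        right
        have hjm : uu0 ⊔ ww = mm := Subtype.ext (by rw [hu', h1])
        have hcalc : (uu0 ⊔ ww) ⊓ cc = uu0 := by
          rw [inf_sup_right, fact1, inf_eq_left.mpr huu0cc, sup_eq_left.mpr]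
          exact (hle _ _).mpr (ldvd_mul_self w₀ u)
        have huz : w₀ * u = w₀ * z := by
          have h2 : mm ⊓ cc = uu0 := by rw [← hjm]; exact hcalc
          rw [h2] at hz
          exact hz
        have huz' : u = z := hM.1 _ _ _ huz
        have : u * t = u * 1 := by rw [mul_one, ← hut, huz']
        exact hM.1 _ _ _ this
    -- conclude y LDvd g'
    have hzg : LDvd z g := H z hzirr hzk₀
    have hngg0 : mm ⊓ cc ≤ gg0 := (hle _ _).mpr (by rw [hz]; exact mul_ldvd_mul w₀ hzg)
    have : mm ≤ gg0 ⊔ ww := by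
      rw [← hphipsi]
      exact sup_le_sup_right hngg0 ww
    have : LDvd (w * y) (w * g') := by
      have := (hle _ _).mp this
      rwa [hg'] at this
    exact ldvd_cancel hM this
  -- apply MaxP k
  have hkg' : LDvd k g' := maxP_of_hypercube hk g' hg'k sub
  have hg'k' : g' = k := ldvd_antisymm hM hg'k hkg'
  have hjtop : gg0 ⊔ ww = top := Subtype.ext (by rw [hg', hg'k']; exact hcx.symm)
  have hgg0cc : gg0 ≤ cc := (hle _ _).mpr hw₀g_c
  have hfinal : (gg0 ⊔ ww) ⊓ cc = gg0 := by
    rw [inf_sup_right, fact1, inf_eq_left.mpr hgg0cc, sup_eq_left.mpr]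
    exact (hle _ _).mpr (ldvd_mul_self w₀ g)
  rw [hjtop, inf_eq_right.mpr (hle_top cc)] at hfinal
  have : w₀ * k₀ = w₀ * g := by
    have := congrArg Subtype.val hfinal
    simp only [hcc, hgg0] at this
    rw [← hk₀, this]
  rw [hM.1 _ _ _ this]
  exact ldvd_refl g

end LDMaux

namespace LDMaux
variable {M : Type*} [Monoid M]

/-- Lemma A: for `x` irreducible, `h(c*x)` right-divides `h(c)*x`. -/
theorem lemA (hM : IsLDM M) (hmap : M → M) (hspec : ∀ a : M, IsMaxHC a (hmap a))
    {c x : M} (hx : IsIrred x) : RDvd (hmap (c * x)) (hmap c * x) := by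
  obtain ⟨hkH, ⟨w, hcx⟩, _⟩ := hspec (c * x)
  by_cases hwc : LDvd w c
  · obtain ⟨k₀, hk₀⟩ := hwc
    have hkk : hmap (c * x) = k₀ * x := by
      apply hM.1 w
      rw [← hcx, hk₀, mul_assoc]
    have hk₀H : IsHypercube k₀ :=
      hypercube_of_maxP hM (maxP_of_ldvd_hypercube hM hkH ⟨x, hkk⟩)
    obtain ⟨e, he⟩ := (hspec c).2.2 k₀ hk₀H ⟨w, hk₀⟩
    exact ⟨e, by rw [he, mul_assoc, ← hkk]⟩
  · obtain ⟨w₀, k₀, hk₀H, hck, s, hws⟩ := lemB hM hx hkH hcx hwc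
    have hsk : k₀ * x = s * hmap (c * x) := by
      apply hM.1 w₀
      calc w₀ * (k₀ * x) = (w₀ * k₀) * x := (mul_assoc _ _ _).symm
        _ = c * x := by rw [← hck]
        _ = w * hmap (c * x) := hcx
        _ = (w₀ * s) * hmap (c * x) := by rw [← hws]
        _ = w₀ * (s * hmap (c * x)) := mul_assoc _ _ _
    obtain ⟨e, he⟩ := (hspec c).2.2 k₀ hk₀H ⟨w₀, hck⟩
    refine ⟨e * s, ?_⟩
    rw [he, mul_assoc, hsk, ← mul_assoc]

theorem claimC (hM : IsLDM M) (hmap : M → M) (hspec : ∀ a : M, IsMaxHC a (hmap a)) :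
    ∀ l : List M, (∀ y ∈ l, IsIrred y) → ∀ a : M,
      RDvd (hmap (a * l.prod)) (hmap a * l.prod) := by
  intro l
  induction l with
  | nil =>
      intro _ a
      simp only [List.prod_nil, mul_one]
      exact rdvd_refl _
  | cons y t ih =>
      intro hirr a
      have h1 := ih (fun z hz => hirr z (List.mem_cons_of_mem y hz)) (a * y)
      have h2 := lemA hM hmap hspec (c := a) (hirr y (List.mem_cons_self))
      obtain ⟨d, hd⟩ := h1
      obtain ⟨e, he⟩ := h2
      rw [List.prod_cons]
      refine ⟨e * d, ?_⟩
      calc hmap a * (y * t.prod) = (hmap a * y) * t.prod := (mul_assoc _ _ _).symm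
        _ = (e * hmap (a * y)) * t.prod := by rw [he]
        _ = e * (hmap (a * y) * t.prod) := mul_assoc _ _ _
        _ = e * (d * hmap (a * y * t.prod)) := by rw [hd]
        _ = (e * d) * hmap (a * y * t.prod) := (mul_assoc _ _ _).symm
        _ = (e * d) * hmap (a * (y * t.prod)) := by rw [mul_assoc a y t.prod]

end LDMaux

namespace LDMaux

theorem stmt_7' {M : Type*} [Monoid M] (hM : IsLDM M)
    (hmap : M → M) (hspec : ∀ a : M, IsMaxHC a (hmap a)) :
    ∀ a b : M, hmap (a * b) = hmap (hmap a * b) := by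
  intro a b
  obtain ⟨S, hS, hcl⟩ := hM.2.2.1
  have hb : b ∈ Submonoid.closure (S : Set M) := by rw [hcl]; exact Submonoid.mem_top b
  obtain ⟨l, hl, rfl⟩ := Submonoid.exists_list_of_mem_closure hb
  have c1 : RDvd (hmap (a * l.prod)) (hmap a * l.prod) :=
    claimC hM hmap hspec l (fun y hy => hS y (hl y hy)) a
  have c2 : RDvd (hmap (a * l.prod)) (hmap (hmap a * l.prod)) :=
    (hspec (hmap a * l.prod)).2.2 _ (hspec (a * l.prod)).1 c1
  have c3 : RDvd (hmap a * l.prod) (a * l.prod) := by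
    obtain ⟨v, hv⟩ := (hspec a).2.1
    exact ⟨v, by rw [← mul_assoc, ← hv]⟩
  have c4 : RDvd (hmap (hmap a * l.prod)) (hmap (a * l.prod)) :=
    (hspec (a * l.prod)).2.2 _ (hspec (hmap a * l.prod)).1
      (rdvd_trans (hspec (hmap a * l.prod)).2.1 c3)
  exact rdvd_antisymm hM c2 c4

end LDMaux

/-- Lemma 20: h(ab) = h(h(a)b). -/
theorem stmt_7 {M : Type*} [Monoid M] (hM : IsLDM M)
    (hmap : M → M) (hspec : ∀ a : M, IsMaxHC a (hmap a)) :
    ∀ a b : M, hmap (a * b) = hmap (hmap a * b) := LDMaux.stmt_7' hM hmap hspec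
end

section
/- Let M be a left divisibility monoid with hypercube map h. A product h_p ⋯ h_1 of nontrivial hypercubes is a right normal form (i.e., h_i = h(h_p ⋯ h_i) for all 1 ≤ i ≤ p) if and only if each adjacent pair satisfies h_i = h(h_{i+1} h_i) for 1 ≤ i < p. -/
section Aux
variable {M : Type*} [Monoid M]

theorem ldvd_refl (a : M) : LDvd a a := ⟨1, (mul_one a).symm⟩
theorem one_ldvd (a : M) : LDvd 1 a := ⟨a, (one_mul a).symm⟩
theorem ldvd_trans {a b c : M} (h1 : LDvd a b) (h2 : LDvd b c) : LDvd a c := by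
  obtain ⟨x, rfl⟩ := h1; obtain ⟨y, rfl⟩ := h2; exact ⟨x * y, mul_assoc a x y⟩
theorem rdvd_refl (a : M) : RDvd a a := ⟨1, (one_mul a).symm⟩
theorem rdvd_trans {a b c : M} (h1 : RDvd a b) (h2 : RDvd b c) : RDvd a c := by
  obtain ⟨x, rfl⟩ := h1; obtain ⟨y, rfl⟩ := h2; exact ⟨y * x, (mul_assoc y x a).symm⟩

theorem ldvd_antisymm (hM : IsLDM M) {a b : M} (h1 : LDvd a b) (h2 : LDvd b a) : a = b := by
  obtain ⟨i, hi⟩ := hM.2.2.2.2.2 b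
  letI := i
  have : (⟨a, h1⟩ : {c : M // LDvd c b}) = ⟨b, ldvd_refl b⟩ :=
    le_antisymm ((hi _ _).mpr h1) ((hi _ _).mpr h2)
  exact congrArg Subtype.val this

theorem eq_one_of_mul_eq_one (hM : IsLDM M) {u v : M} (h : u * v = 1) : u = 1 ∧ v = 1 := by
  have hu : u = 1 := ldvd_antisymm hM ⟨v, h.symm⟩ (one_ldvd u)
  refine ⟨hu, ?_⟩
  rw [hu, one_mul] at h; exact h

theorem rdvd_antisymm (hM : IsLDM M) {a b : M} (h1 : RDvd a b) (h2 : RDvd b a) : a = b := by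
  obtain ⟨p, hp⟩ := h1
  obtain ⟨q, hq⟩ := h2
  have h3 : (p * q) * b = 1 * b := by rw [one_mul, mul_assoc, ← hq, ← hp]
  have hpq : p * q = 1 := hM.2.1 b _ _ h3
  have hp1 : p = 1 := (eq_one_of_mul_eq_one hM hpq).1
  rw [hp, hp1, one_mul]

theorem ldvd_mul_left {a x y : M} (h : LDvd x y) : LDvd (a * x) (a * y) := by
  obtain ⟨t, rfl⟩ := h; exact ⟨t, (mul_assoc a x t).symm⟩

theorem ldvd_of_mul_ldvd (hM : IsLDM M) {a x y : M} (h : LDvd (a * x) (a * y)) : LDvd x y := by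
  obtain ⟨t, ht⟩ := h
  exact ⟨t, hM.1 a _ _ (by rw [ht, mul_assoc])⟩

/-- gcd function -/
noncomputable def gcdf (hM : IsLDM M) (a b : M) : M := (hM.2.2.2.1 a b).choose

theorem gcdf_ldvd_left (hM : IsLDM M) (a b : M) : LDvd (gcdf hM a b) a :=
  (hM.2.2.2.1 a b).choose_spec.1
theorem gcdf_ldvd_right (hM : IsLDM M) (a b : M) : LDvd (gcdf hM a b) b :=
  (hM.2.2.2.1 a b).choose_spec.2.1
theorem ldvd_gcdf (hM : IsLDM M) {a b c : M} (h1 : LDvd c a) (h2 : LDvd c b) :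
    LDvd c (gcdf hM a b) :=
  (hM.2.2.2.1 a b).choose_spec.2.2 c h1 h2

theorem gcdf_comm (hM : IsLDM M) (a b : M) : gcdf hM a b = gcdf hM b a :=
  ldvd_antisymm hM
    (ldvd_gcdf hM (gcdf_ldvd_right hM a b) (gcdf_ldvd_left hM a b))
    (ldvd_gcdf hM (gcdf_ldvd_right hM b a) (gcdf_ldvd_left hM b a))

theorem gcdf_eq_right (hM : IsLDM M) {a b : M} (h : LDvd b a) : gcdf hM a b = b :=
  ldvd_antisymm hM (gcdf_ldvd_right hM a b) (ldvd_gcdf hM h (ldvd_refl b))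

theorem exists_rlcm (hM : IsLDM M) {x y m : M} (hx : LDvd x m) (hy : LDvd y m) :
    ∃ c, IsRightLcm x y c := by
  obtain ⟨i, hi⟩ := hM.2.2.2.2.2 m
  letI := i
  set X : {b : M // LDvd b m} := ⟨x, hx⟩
  set Y : {b : M // LDvd b m} := ⟨y, hy⟩
  refine ⟨(X ⊔ Y).1, (hi _ _).mp le_sup_left, (hi _ _).mp le_sup_right, ?_⟩
  intro w hxw hyw
  have hG : LDvd (gcdf hM m w) m := gcdf_ldvd_left hM m w
  have h1 : X ⊔ Y ≤ ⟨gcdf hM m w, hG⟩ :=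
    sup_le ((hi _ _).mpr (ldvd_gcdf hM hx hxw)) ((hi _ _).mpr (ldvd_gcdf hM hy hyw))
  exact ldvd_trans ((hi _ _).mp h1) (gcdf_ldvd_right hM m w)

/-- right lcm function (junk value 1 if no common multiple) -/
noncomputable def rlcmf (a b : M) : M :=
  @dite _ (∃ c, IsRightLcm a b c) (Classical.propDecidable _) (fun h => h.choose) (fun _ => 1)

theorem rlcmf_spec {a b : M} (h : ∃ c, IsRightLcm a b c) : IsRightLcm a b (rlcmf a b) := by
  rw [rlcmf, dif_pos h]; exact h.choose_spec

theorem rlcmf_eq_left (hM : IsLDM M) {a b : M} (h : LDvd b a) : rlcmf a b = a := by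
  have hex : ∃ c, IsRightLcm a b c := ⟨a, ldvd_refl a, h, fun m h1 _ => h1⟩
  have hs := rlcmf_spec hex
  exact ldvd_antisymm hM (hs.2.2 a (ldvd_refl a) h) hs.1

theorem rlcmf_eq_right (hM : IsLDM M) {a b : M} (h : LDvd a b) : rlcmf a b = b := by
  have hex : ∃ c, IsRightLcm a b c := ⟨b, h, ldvd_refl b, fun m _ h2 => h2⟩
  have hs := rlcmf_spec hex
  exact ldvd_antisymm hM (hs.2.2 b h (ldvd_refl b)) hs.2.1

end Aux
section Aux2
variable {M : Type*} [Monoid M]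

theorem sup_inf_transfer (hM : IsLDM M) {m : M} :
    (∀ x y (hx : LDvd x m) (hy : LDvd y m) z (hz : LDvd z m),
      gcdf hM x (rlcmf y z) = rlcmf (gcdf hM x y) (gcdf hM x z)) ∧
    (∀ x y (hx : LDvd x m) (hy : LDvd y m) z (hz : LDvd z m),
      rlcmf (gcdf hM x y) z = gcdf hM (rlcmf x z) (rlcmf y z)) := by
  obtain ⟨i, hi⟩ := hM.2.2.2.2.2 m
  letI := i
  have hsup : ∀ (p q : {b : M // LDvd b m}), (p ⊔ q).1 = rlcmf p.1 q.1 := by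
    intro p q
    have hex : ∃ c, IsRightLcm p.1 q.1 c := exists_rlcm hM p.2 q.2
    have hs := rlcmf_spec hex
    refine ldvd_antisymm hM ?_ ?_
    · have hmem : LDvd (rlcmf p.1 q.1) m := hs.2.2 m p.2 q.2
      exact (hi _ _).mp
        (sup_le (c := ⟨rlcmf p.1 q.1, hmem⟩) ((hi _ _).mpr hs.1) ((hi _ _).mpr hs.2.1))
    · refine hs.2.2 _ ((hi _ _).mp (le_sup_left (a := p) (b := q)))
        ((hi _ _).mp (le_sup_right (a := p) (b := q)))
  have hinf : ∀ (p q : {b : M // LDvd b m}), (p ⊓ q).1 = gcdf hM p.1 q.1 := by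
    intro p q
    refine ldvd_antisymm hM ?_ ?_
    · exact ldvd_gcdf hM ((hi _ _).mp (inf_le_left (a := p) (b := q)))
        ((hi _ _).mp (inf_le_right (a := p) (b := q)))
    · have h1 : LDvd (gcdf hM p.1 q.1) m := ldvd_trans (gcdf_ldvd_left hM p.1 q.1) p.2
      exact (hi _ _).mp (le_inf
        ((hi ⟨_, h1⟩ p).mpr (gcdf_ldvd_left hM p.1 q.1)) ((hi ⟨_, h1⟩ q).mpr (gcdf_ldvd_right hM p.1 q.1)))
  constructor
  · intro x y hx hy z hz
    set X : {b : M // LDvd b m} := ⟨x, hx⟩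
    set Y : {b : M // LDvd b m} := ⟨y, hy⟩
    set Z : {b : M // LDvd b m} := ⟨z, hz⟩
    have h1 : gcdf hM x (rlcmf y z) = (X ⊓ (Y ⊔ Z)).1 := by
      rw [hinf X (Y ⊔ Z), hsup Y Z]
    have h2 : rlcmf (gcdf hM x y) (gcdf hM x z) = ((X ⊓ Y) ⊔ (X ⊓ Z)).1 := by
      rw [hsup (X ⊓ Y) (X ⊓ Z), hinf X Y, hinf X Z]
    rw [h1, h2, inf_sup_left]
  · intro x y hx hy z hz
    set X : {b : M // LDvd b m} := ⟨x, hx⟩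
    set Y : {b : M // LDvd b m} := ⟨y, hy⟩
    set Z : {b : M // LDvd b m} := ⟨z, hz⟩
    have h1 : rlcmf (gcdf hM x y) z = ((X ⊓ Y) ⊔ Z).1 := by
      rw [hsup (X ⊓ Y) Z, hinf X Y]
    have h2 : gcdf hM (rlcmf x z) (rlcmf y z) = ((X ⊔ Z) ⊓ (Y ⊔ Z)).1 := by
      rw [hinf (X ⊔ Z) (Y ⊔ Z), hsup X Z, hsup Y Z]
    rw [h1, h2, sup_inf_right]

theorem gcd_rlcm_distrib (hM : IsLDM M) {m x y z : M} (hx : LDvd x m) (hy : LDvd y m)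
    (hz : LDvd z m) : gcdf hM x (rlcmf y z) = rlcmf (gcdf hM x y) (gcdf hM x z) :=
  (sup_inf_transfer hM).1 x y hx hy z hz

theorem rlcm_gcd_distrib (hM : IsLDM M) {m x y z : M} (hx : LDvd x m) (hy : LDvd y m)
    (hz : LDvd z m) : rlcmf (gcdf hM x y) z = gcdf hM (rlcmf x z) (rlcmf y z) :=
  (sup_inf_transfer hM).2 x y hx hy z hz

theorem gcdf_mul_left (hM : IsLDM M) (d x y : M) :
    gcdf hM (d * x) (d * y) = d * gcdf hM x y := by
  refine ldvd_antisymm hM ?_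
    (ldvd_gcdf hM (ldvd_mul_left (gcdf_ldvd_left hM x y))
      (ldvd_mul_left (gcdf_ldvd_right hM x y)))
  set e := gcdf hM (d * x) (d * y)
  have hedx : LDvd e (d * x) := gcdf_ldvd_left hM _ _
  have hedy : LDvd e (d * y) := gcdf_ldvd_right hM _ _
  have hd : LDvd d (d * x) := ⟨x, rfl⟩
  obtain ⟨j, hj1, hj2, hj3⟩ := exists_rlcm hM hedx hd
  obtain ⟨e', he'⟩ := hj2
  have hje : LDvd j (d * x) := hj3 _ hedx hd
  have hjf : LDvd j (d * y) := hj3 _ hedy ⟨y, rfl⟩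
  have h1 : LDvd e' x := ldvd_of_mul_ldvd hM (he' ▸ hje)
  have h2 : LDvd e' y := ldvd_of_mul_ldvd hM (he' ▸ hjf)
  exact ldvd_trans hj1 (he' ▸ ldvd_mul_left (ldvd_gcdf hM h1 h2))

/-- join of a list of elements via iterated right lcm -/
noncomputable def joinl : List M → M
  | [] => 1
  | y :: t => rlcmf y (joinl t)

theorem joinl_ldvd (hM : IsLDM M) {w : M} : ∀ (l : List M), (∀ y ∈ l, LDvd y w) →
    LDvd (joinl l) w
  | [], _ => one_ldvd w
  | y :: t, h => by
    have ht : LDvd (joinl t) w := joinl_ldvd hM t (fun z hz => h z (List.mem_cons_of_mem y hz))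
    have hy : LDvd y w := h y (List.mem_cons_self)
    have hs := rlcmf_spec (exists_rlcm hM hy ht)
    exact hs.2.2 w hy ht

theorem ldvd_joinl (hM : IsLDM M) {w : M} : ∀ (l : List M), (∀ y ∈ l, LDvd y w) →
    ∀ y ∈ l, LDvd y (joinl l)
  | [], _ => by intro z hz; cases hz
  | y :: t, h => by
    intro z hz
    have ht : LDvd (joinl t) w := joinl_ldvd hM t (fun z hz => h z (List.mem_cons_of_mem y hz))
    have hy : LDvd y w := h y (List.mem_cons_self)
    have hs := rlcmf_spec (exists_rlcm hM hy ht)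
    rcases List.mem_cons.mp hz with rfl | hz
    · exact hs.1
    · exact ldvd_trans (ldvd_joinl hM t (fun z hz => h z (List.mem_cons_of_mem y hz)) z hz) hs.2.1

end Aux2
section Aux3
variable {M : Type*} [Monoid M]

theorem irr_atom (hM : IsLDM M) {y v : M} (hy : IsIrred y) (hv : LDvd v y) :
    v = 1 ∨ v = y := by
  obtain ⟨c, hc⟩ := hv
  rcases hy.2 v c hc with h | h
  · exact Or.inl h
  · exact Or.inr (by rw [hc, h, mul_one])

theorem atom_irr (hM : IsLDM M) {z : M} (hz1 : z ≠ 1)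
    (hz2 : ∀ v, LDvd v z → v = 1 ∨ v = z) : IsIrred z := by
  refine ⟨hz1, fun b c hbc => ?_⟩
  rcases hz2 b ⟨c, hbc⟩ with h | h
  · exact Or.inl h
  · right
    subst h
    exact hM.1 b c 1 (by rw [← hbc, mul_one])

/-- the "P" property: c is the right lcm of its irreducible left divisors -/
def PropP (c : M) : Prop :=
  ∀ u, LDvd u c → (∀ y, IsIrred y → LDvd y c → LDvd y u) → LDvd c u

theorem hyper_P {c : M} (hc : IsHypercube c) : PropP c := by
  obtain ⟨s, hs1, hs2⟩ := hc
  intro u hu hirr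
  exact hs2.2 u (fun x hx => hirr x (hs1 x hx) (hs2.1 x hx))

theorem P_hyper (hM : IsLDM M) {c : M} (hc : PropP c) : IsHypercube c := by
  have hfin : {y : M | IsIrred y ∧ LDvd y c}.Finite :=
    (hM.2.2.2.2.1 c).subset (fun y hy => hy.2)
  refine ⟨hfin.toFinset, ?_, ?_, ?_⟩
  · intro x hx; exact (hfin.mem_toFinset.mp hx).1
  · intro x hx; exact (hfin.mem_toFinset.mp hx).2
  · intro w hw
    have hu : LDvd (gcdf hM c w) c := gcdf_ldvd_left hM c w
    have : LDvd c (gcdf hM c w) := by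
      refine hc _ hu (fun y hy1 hy2 => ?_)
      exact ldvd_gcdf hM hy2 (hw y (hfin.mem_toFinset.mpr ⟨hy1, hy2⟩))
    exact ldvd_trans this (gcdf_ldvd_right hM c w)

theorem fold_lemma (hM : IsLDM M) (k u : M) : ∀ (l : List M),
    (∀ y ∈ l, IsIrred y ∧ LDvd y k) → ∀ q, LDvd q k →
    (∀ y ∈ l, LDvd y q → LDvd y u) → LDvd (gcdf hM q (joinl l)) u
  | [], _, q, hq, _ => ldvd_trans (gcdf_ldvd_right hM q (1 : M)) (one_ldvd u)
  | y :: t, h, q, hq, hyp => by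
    have hyk : LDvd y k := (h y (List.mem_cons_self)).2
    have hyi : IsIrred y := (h y (List.mem_cons_self)).1
    have htk : LDvd (joinl t) k := joinl_ldvd hM t (fun z hz => (h z (List.mem_cons_of_mem y hz)).2)
    have hdist : gcdf hM q (rlcmf y (joinl t)) = rlcmf (gcdf hM q y) (gcdf hM q (joinl t)) :=
      gcd_rlcm_distrib hM hq hyk htk
    show LDvd (gcdf hM q (rlcmf y (joinl t))) u
    rw [hdist]
    have h1 : LDvd (gcdf hM q y) u := by
      rcases irr_atom hM hyi (gcdf_ldvd_right hM q y) with h' | h'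
      · rw [h']; exact one_ldvd u
      · have : LDvd y q := h' ▸ gcdf_ldvd_left hM q y
        rw [h']; exact hyp y (List.mem_cons_self) this
    have h2 : LDvd (gcdf hM q (joinl t)) u :=
      fold_lemma hM k u t (fun z hz => h z (List.mem_cons_of_mem y hz)) q hq
        (fun z hz => hyp z (List.mem_cons_of_mem y hz))
    exact (rlcmf_spec (exists_rlcm hM h1 h2)).2.2 u h1 h2

theorem Qk (hM : IsLDM M) {k : M} (hk : IsHypercube k) :
    ∀ q u, LDvd q k → (∀ y, IsIrred y → LDvd y q → LDvd y u) → LDvd q u := by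
  have hfin : {y : M | IsIrred y ∧ LDvd y k}.Finite :=
    (hM.2.2.2.2.1 k).subset (fun y hy => hy.2)
  set l := hfin.toFinset.toList with hl
  have hmem : ∀ y, y ∈ l ↔ (IsIrred y ∧ LDvd y k) := by
    intro y
    rw [hl, Finset.mem_toList, Set.Finite.mem_toFinset]
    exact Iff.rfl
  have hjk : joinl l = k := by
    refine ldvd_antisymm hM (joinl_ldvd hM l (fun y hy => ((hmem y).mp hy).2)) ?_
    exact hyper_P hk (joinl l) (joinl_ldvd hM l (fun y hy => ((hmem y).mp hy).2))
      (fun y hy1 hy2 => ldvd_joinl hM l (fun z hz => ((hmem z).mp hz).2) y ((hmem y).mpr ⟨hy1, hy2⟩))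
  intro q u hq hyp
  have := fold_lemma hM k u l (fun y hy => (hmem y).mp hy) q hq
    (fun y hy hyq => hyp y ((hmem y).mp hy).1 hyq)
  rwa [hjk, gcdf_comm hM, gcdf_eq_right hM hq] at this

end Aux3
section Aux4
variable {M : Type*} [Monoid M]

noncomputable def lcompl (x y : M) : M :=
  @dite _ (LDvd x y) (Classical.propDecidable _) (fun h => h.choose) (fun _ => 1)

theorem lcompl_spec {x y : M} (h : LDvd x y) : y = x * lcompl x y := by
  rw [lcompl, dif_pos h]; exact h.choose_spec

theorem star_lemma (hM : IsLDM M) (hmap : M → M) (hspec : ∀ a : M, IsMaxHC a (hmap a))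
    (a b k : M) (hk : IsHypercube k) (hdvd : RDvd k (a * b)) : RDvd k (hmap a * b) := by
  obtain ⟨d, hd⟩ := hdvd
  set g := gcdf hM d a with hg
  have hgd : LDvd g d := gcdf_ldvd_left hM d a
  have hga : LDvd g a := gcdf_ldvd_right hM d a
  obtain ⟨k', hk'a⟩ := id hga
  have ham : LDvd a (a * b) := ⟨b, rfl⟩
  have hdm : LDvd d (a * b) := ⟨k, hd⟩
  have hgek' : ∀ e, LDvd e k' → LDvd (g * e) a := by
    rintro e ⟨t, ht⟩
    exact ⟨t, by rw [hk'a, ht, mul_assoc]⟩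
  set Phi : M → M := fun e => lcompl d (rlcmf (g * e) d) with hPhidef
  set Psi : M → M := fun f => lcompl g (gcdf hM (d * f) a) with hPsidef
  have hrlcm : ∀ e, LDvd e k' → IsRightLcm (g * e) d (rlcmf (g * e) d) := by
    intro e he
    exact rlcmf_spec (exists_rlcm hM (ldvd_trans (hgek' e he) ham) hdm)
  have hPhi_spec : ∀ e, LDvd e k' → rlcmf (g * e) d = d * Phi e := by
    intro e he
    exact lcompl_spec (hrlcm e he).2.1
  have hPhi_k : ∀ e, LDvd e k' → LDvd (Phi e) k := by
    intro e he
    have h1 : LDvd (g * e) (d * k) := by rw [← hd]; exact ldvd_trans (hgek' e he) ham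
    have h2 : LDvd d (d * k) := ⟨k, rfl⟩
    have h3 : LDvd (rlcmf (g * e) d) (d * k) := (hrlcm e he).2.2 _ h1 h2
    rw [hPhi_spec e he] at h3
    exact ldvd_of_mul_ldvd hM h3
  have hPhi_mono : ∀ e1 e2, LDvd e1 k' → LDvd e2 k' → LDvd e1 e2 → LDvd (Phi e1) (Phi e2) := by
    intro e1 e2 h1 h2 h12
    have h3 : LDvd (rlcmf (g * e1) d) (rlcmf (g * e2) d) :=
      (hrlcm e1 h1).2.2 _ (ldvd_trans (ldvd_mul_left h12) (hrlcm e2 h2).1) (hrlcm e2 h2).2.1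
    rw [hPhi_spec e1 h1, hPhi_spec e2 h2] at h3
    exact ldvd_of_mul_ldvd hM h3
  have hgPsi : ∀ f, LDvd g (gcdf hM (d * f) a) := by
    intro f
    exact ldvd_gcdf hM (ldvd_trans hgd ⟨f, rfl⟩) hga
  have hPsi_spec : ∀ f, gcdf hM (d * f) a = g * Psi f := fun f => lcompl_spec (hgPsi f)
  have hPsi_k' : ∀ f, LDvd (Psi f) k' := by
    intro f
    have h1 : LDvd (gcdf hM (d * f) a) a := gcdf_ldvd_right hM _ _
    rw [hPsi_spec f, hk'a] at h1
    exact ldvd_of_mul_ldvd hM h1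
  have hPsi_mono : ∀ f1 f2, LDvd f1 f2 → LDvd (Psi f1) (Psi f2) := by
    intro f1 f2 h12
    have h1 : LDvd (gcdf hM (d * f1) a) (gcdf hM (d * f2) a) :=
      ldvd_gcdf hM (ldvd_trans (gcdf_ldvd_left hM _ _) (ldvd_mul_left h12))
        (gcdf_ldvd_right hM _ _)
    rw [hPsi_spec f1, hPsi_spec f2] at h1
    exact ldvd_of_mul_ldvd hM h1
  have hPsiPhi : ∀ e, LDvd e k' → Psi (Phi e) = e := by
    intro e he
    have hgea : LDvd (g * e) a := hgek' e he
    have key : gcdf hM (d * Phi e) a = g * e := by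
      rw [← hPhi_spec e he, gcdf_comm hM,
        gcd_rlcm_distrib hM (m := a * b) ham (ldvd_trans hgea ham) hdm,
        gcdf_eq_right hM hgea, gcdf_comm hM a d, ← hg]
      exact rlcmf_eq_left hM ⟨e, rfl⟩
    have h1 := (hPsi_spec (Phi e)).symm.trans key
    exact hM.1 g _ _ h1
  have hq_spec : rlcmf a d = d * Phi k' := by
    have h1 := hPhi_spec k' (ldvd_refl k')
    rwa [← hk'a] at h1
  have hPhiPsi : ∀ f, LDvd f (Phi k') → Phi (Psi f) = f := by
    intro f hf
    have hfk : LDvd f k := ldvd_trans hf (hPhi_k k' (ldvd_refl k'))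
    have hdfm : LDvd (d * f) (a * b) := by rw [hd]; exact ldvd_mul_left hfk
    have key : rlcmf (g * Psi f) d = d * f := by
      rw [← hPsi_spec f,
        rlcm_gcd_distrib hM (m := a * b) hdfm ham hdm,
        rlcmf_eq_left hM ⟨f, rfl⟩, hq_spec, gcdf_mul_left hM d f (Phi k'),
        gcdf_comm hM f (Phi k'), gcdf_eq_right hM hf]
    rw [hPhi_spec (Psi f) (hPsi_k' f)] at key
    exact hM.1 d _ _ key
  have hPhi_one : Phi (1 : M) = 1 := by
    have h1 : rlcmf (g * 1) d = d := by rw [mul_one]; exact rlcmf_eq_right hM hgd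
    have h2 := hPhi_spec 1 (one_ldvd k')
    rw [h1] at h2
    have h3 : d * Phi (1 : M) = d * 1 := by rw [mul_one, ← h2]
    exact hM.1 d _ _ h3
  have hPsi_one : Psi (1 : M) = 1 := by
    have h2 := hPsi_spec 1
    rw [mul_one] at h2
    have h3 : g * Psi (1 : M) = g * 1 := by rw [mul_one, ← h2, hg]
    exact hM.1 g _ _ h3
  have hk'hyp : IsHypercube k' := by
    refine P_hyper hM ?_
    intro u hu hirr
    have hq_k : LDvd (Phi k') k := hPhi_k k' (ldvd_refl k')
    have hQ : LDvd (Phi k') (Phi u) := by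
      refine Qk hM hk (Phi k') (Phi u) hq_k ?_
      intro y hy hyq
      have hzk' : LDvd (Psi y) k' := hPsi_k' y
      have hyz : Phi (Psi y) = y := hPhiPsi y hyq
      have hz1 : Psi y ≠ 1 := by
        intro h0
        apply hy.1
        rw [← hyz, h0, hPhi_one]
      have hzirr : IsIrred (Psi y) := by
        refine atom_irr hM hz1 ?_
        intro v hv
        have hvk' : LDvd v k' := ldvd_trans hv hzk'
        have h4 : LDvd (Phi v) y := by
          rw [← hyz]; exact hPhi_mono v (Psi y) hvk' hzk' hv
        rcases irr_atom hM hy h4 with h' | h'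
        · left
          rw [← hPsiPhi v hvk', h', hPsi_one]
        · right
          rw [← hPsiPhi v hvk', h']
      have hzu : LDvd (Psi y) u := hirr (Psi y) hzirr hzk'
      have h5 : LDvd (Phi (Psi y)) (Phi u) := hPhi_mono (Psi y) u hzk' hu hzu
      rwa [hyz] at h5
    have h6 := hPsi_mono _ _ hQ
    rwa [hPsiPhi k' (ldvd_refl k'), hPsiPhi u hu] at h6
  have hk'rd : RDvd k' a := ⟨g, hk'a⟩
  obtain ⟨hhyp, hrd, hmax⟩ := hspec a
  obtain ⟨a', ha'⟩ := hrd
  obtain ⟨e, he⟩ := hmax k' hk'hyp hk'rd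
  have hgae : g = a' * e := by
    refine (hM.2.1 k' _ _ ?_).symm
    rw [← hk'a, ha', he, mul_assoc]
  obtain ⟨t, ht⟩ := hgd
  refine ⟨e * t, ?_⟩
  apply hM.1 a'
  have h1 : a' * (hmap a * b) = a * b := by rw [← mul_assoc, ← ha']
  rw [h1, hd, ht, hgae]
  simp only [mul_assoc]

end Aux4
section Aux5
variable {M : Type*} [Monoid M]

theorem hmap_eq_self (hM : IsLDM M) (hmap : M → M) (hspec : ∀ a : M, IsMaxHC a (hmap a))
    {a : M} (ha : IsHypercube a) : hmap a = a :=
  rdvd_antisymm hM (hspec a).2.1 ((hspec a).2.2 a ha (rdvd_refl a))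

theorem key_identity (hM : IsLDM M) (hmap : M → M) (hspec : ∀ a : M, IsMaxHC a (hmap a))
    (a b : M) : hmap (a * b) = hmap (hmap a * b) := by
  refine rdvd_antisymm hM ?_ ?_
  · have h1 : RDvd (hmap (a * b)) (hmap a * b) :=
      star_lemma hM hmap hspec a b _ (hspec (a * b)).1 (hspec (a * b)).2.1
    exact (hspec (hmap a * b)).2.2 _ (hspec (a * b)).1 h1
  · obtain ⟨a', ha'⟩ := (hspec a).2.1
    have h2 : RDvd (hmap a * b) (a * b) := by
      refine ⟨a', ?_⟩
      conv_lhs => rw [ha']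
      rw [mul_assoc]
    exact (hspec (a * b)).2.2 _ (hspec (hmap a * b)).1
      (rdvd_trans (hspec (hmap a * b)).2.1 h2)

end Aux5

/-- Proposition 21: normality of a word of nontrivial hypercubes is a local
condition on adjacent pairs. -/
theorem stmt_8 {M : Type*} [Monoid M] (hM : IsLDM M)
    (hmap : M → M) (hspec : ∀ a : M, IsMaxHC a (hmap a))
    (L : List M) (hL : ∀ x ∈ L, IsHypercube x ∧ x ≠ 1) :
    (∀ n (hn : n < L.length), hmap ((L.take (n + 1)).prod) = L.get ⟨n, hn⟩) ↔
    (∀ n (hn : n + 1 < L.length),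
      hmap (L.get ⟨n, Nat.lt_of_succ_lt hn⟩ * L.get ⟨n + 1, hn⟩) = L.get ⟨n + 1, hn⟩) := by

  have hsplit : ∀ (n : ℕ) (hn : n < L.length),
      (L.take (n + 1)).prod = (L.take n).prod * L.get ⟨n, hn⟩ := by
    intro n hn
    rw [List.take_succ, List.prod_append, List.getElem?_eq_getElem hn]
    simp [List.get_eq_getElem]
  constructor
  · intro G n hn
    have h1 := G n (Nat.lt_of_succ_lt hn)
    have h2 := G (n + 1) hn
    rw [hsplit (n + 1) hn, key_identity hM hmap hspec, h1] at h2
    exact h2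
  · intro Pw n
    induction n with
    | zero =>
      intro hn
      have hb : (L.take 1).prod = L.get ⟨0, hn⟩ := by
        rw [hsplit 0 hn]; simp
      rw [hb]
      exact hmap_eq_self hM hmap hspec (hL _ (L.get_mem _)).1
    | succ m ih =>
      intro hn
      have hm : m < L.length := Nat.lt_of_succ_lt hn
      have h1 := ih hm
      rw [hsplit (m + 1) hn, key_identity hM hmap hspec, h1]
      exact Pw m hn
end

section
/- Let M be a left divisibility monoid, a ∈ M with right normal form h_m ⋯ h_1, and y a hypercube. Define y_m = y, y_{i-1} = h(y_i h_i) and h'_i by y_i h_i = h'_i y_{i-1} for i = m, …, 1. Then the right normal form of ya is h'_m ⋯ h'_1 · y_0 (dropping h'_m if trivial), and in particular each h'_i and y_0 are hypercubes. -/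
namespace LDMAux

variable {M : Type*} [Monoid M]

theorem ldvd_refl (a : M) : LDvd a a := ⟨1, (mul_one a).symm⟩
theorem ldvd_mul (a b : M) : LDvd a (a * b) := ⟨b, rfl⟩
theorem one_ldvd (a : M) : LDvd 1 a := ⟨a, (one_mul a).symm⟩
theorem ldvd_trans {a b c : M} : LDvd a b → LDvd b c → LDvd a c
  | ⟨d, hd⟩, ⟨e, he⟩ => ⟨d * e, by rw [he, hd, mul_assoc]⟩
theorem rdvd_refl (a : M) : RDvd a a := ⟨1, (one_mul a).symm⟩
theorem rdvd_mul (a b : M) : RDvd b (a * b) := ⟨a, rfl⟩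
theorem rdvd_trans {a b c : M} : RDvd a b → RDvd b c → RDvd a c
  | ⟨d, hd⟩, ⟨e, he⟩ => ⟨e * d, by rw [he, hd, mul_assoc]⟩

theorem ldvd_antisymm (hM : IsLDM M) {a b : M} (h1 : LDvd a b) (h2 : LDvd b a) : a = b := by
  obtain ⟨i, hi⟩ := hM.2.2.2.2.2 b
  letI := i
  have hab : (⟨a, h1⟩ : {x : M // LDvd x b}) ≤ ⟨b, ldvd_refl b⟩ := (hi _ _).2 h1
  have hba : (⟨b, ldvd_refl b⟩ : {x : M // LDvd x b}) ≤ ⟨a, h1⟩ := (hi _ _).2 h2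
  exact congrArg Subtype.val (le_antisymm hab hba)

theorem mul_eq_one_iff (hM : IsLDM M) {a b : M} (h : a * b = 1) : a = 1 ∧ b = 1 := by
  have ha : a = 1 := ldvd_antisymm hM ⟨b, h.symm⟩ (one_ldvd a)
  refine ⟨ha, ?_⟩
  rw [ha, one_mul] at h; exact h

theorem rdvd_antisymm (hM : IsLDM M) {a b : M} (h1 : RDvd a b) (h2 : RDvd b a) : a = b := by
  obtain ⟨d, hd⟩ := h1
  obtain ⟨e, he⟩ := h2
  have h3 : (d * e) * b = 1 * b := by
    rw [one_mul, mul_assoc, ← he]; exact hd.symm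
  have hde : d * e = 1 := hM.2.1 _ _ _ h3
  have hd1 : d = 1 := (mul_eq_one_iff hM hde).1
  rw [hd, hd1, one_mul]

theorem hypercube_one : IsHypercube (1 : M) := by
  refine ⟨∅, by simp, by simp, fun m _ => one_ldvd m⟩

theorem irred_hypercube {q : M} (hq : IsIrred q) : IsHypercube q := by
  refine ⟨{q}, by simpa using hq, ?_, ?_⟩
  · intro x hx; simp only [Finset.coe_singleton, Set.mem_singleton_iff] at hx
    exact hx ▸ ldvd_refl q
  · intro m hm; exact hm q (by simp)

theorem ldvd_irred {q b : M} (hq : IsIrred q) (h : LDvd b q) : b = 1 ∨ b = q := by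
  obtain ⟨d, hd⟩ := h
  rcases hq.2 b d hd with h1 | h1
  · exact Or.inl h1
  · right; rw [hd, h1, mul_one]

theorem hmap_hc {hmap : M → M} (hspec : ∀ a : M, IsMaxHC a (hmap a)) (a : M) :
    IsHypercube (hmap a) := (hspec a).1
theorem hmap_rdvd {hmap : M → M} (hspec : ∀ a : M, IsMaxHC a (hmap a)) (a : M) :
    RDvd (hmap a) a := (hspec a).2.1
theorem hmap_max {hmap : M → M} (hspec : ∀ a : M, IsMaxHC a (hmap a)) {a k : M}
    (hk : IsHypercube k) (h : RDvd k a) : RDvd k (hmap a) := (hspec a).2.2 k hk h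

theorem hmap_eq_self (hM : IsLDM M) {hmap : M → M} (hspec : ∀ a : M, IsMaxHC a (hmap a))
    {h : M} (hh : IsHypercube h) : hmap h = h :=
  rdvd_antisymm hM (hmap_rdvd hspec h) (hmap_max hspec hh (rdvd_refl h))

theorem exists_factorization (hM : IsLDM M) (a : M) :
    ∃ l : List M, (∀ q ∈ l, IsIrred q) ∧ a = l.prod := by
  obtain ⟨S, hS, hcl⟩ := hM.2.2.1
  have ha : a ∈ Submonoid.closure (S : Set M) := by rw [hcl]; trivial
  induction ha using Submonoid.closure_induction with
  | mem x hx => exact ⟨[x], by simpa using hS x hx, by simp⟩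
  | one => exact ⟨[], by simp, by simp⟩
  | mul x y hx hy ihx ihy =>
    obtain ⟨l1, hl1, rfl⟩ := ihx
    obtain ⟨l2, hl2, rfl⟩ := ihy
    refine ⟨l1 ++ l2, ?_, by simp⟩
    intro q hq
    rcases List.mem_append.1 hq with h | h
    · exact hl1 q h
    · exact hl2 q h

end LDMAux
namespace LDMAux

variable {M : Type*} [Monoid M]

theorem exists_rlcm (hM : IsLDM M) {x y z : M} (hx : LDvd x z) (hy : LDvd y z) :
    ∃ j, IsRightLcm x y j ∧ LDvd j z := by
  obtain ⟨i, hi⟩ := hM.2.2.2.2.2 z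
  letI := i
  set X : {b : M // LDvd b z} := ⟨x, hx⟩
  set Y : {b : M // LDvd b z} := ⟨y, hy⟩
  refine ⟨(X ⊔ Y).1, ⟨(hi X (X ⊔ Y)).1 le_sup_left, (hi Y (X ⊔ Y)).1 le_sup_right, ?_⟩,
    (X ⊔ Y).2⟩
  intro m hxm hym
  obtain ⟨g, hg1, hg2, hg3⟩ := hM.2.2.2.1 (X ⊔ Y).1 m
  have hxg : LDvd x g := hg3 x ((hi X (X ⊔ Y)).1 le_sup_left) hxm
  have hyg : LDvd y g := hg3 y ((hi Y (X ⊔ Y)).1 le_sup_right) hym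
  have hgz : LDvd g z := ldvd_trans hg1 (X ⊔ Y).2
  have : X ⊔ Y ≤ ⟨g, hgz⟩ := sup_le ((hi X ⟨g, hgz⟩).2 hxg) ((hi Y ⟨g, hgz⟩).2 hyg)
  exact ldvd_trans ((hi _ _).1 this) hg2

theorem exists_rlcmFinset (hM : IsLDM M) (s : Finset M) {z : M}
    (hs : ∀ q ∈ s, LDvd q z) : ∃ j, IsRightLcmSet (↑s) j ∧ LDvd j z := by
  classical
  induction s using Finset.induction_on with
  | empty => exact ⟨1, ⟨by simp, fun m _ => one_ldvd m⟩, one_ldvd z⟩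
  | @insert a s ha ih =>
    obtain ⟨j', hj', hj'z⟩ := ih (fun q hq => hs q (Finset.mem_insert_of_mem hq))
    obtain ⟨j, hj, hjz⟩ := exists_rlcm hM (hs a (Finset.mem_insert_self a s)) hj'z
    refine ⟨j, ⟨?_, ?_⟩, hjz⟩
    · intro q hq
      rcases Finset.mem_insert.1 (by exact_mod_cast hq) with rfl | hq'
      · exact hj.1
      · exact ldvd_trans (hj'.1 q (by exact_mod_cast hq')) hj.2.1
    · intro m hm
      refine hj.2.2 m (hm a (by simp)) (hj'.2 m ?_)
      intro q hq
      refine hm q ?_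
      simp only [Finset.coe_insert, Set.mem_insert_iff]
      right; exact_mod_cast hq

theorem mul_rlcm (hM : IsLDM M) {x y j : M} (c : M) (h : IsRightLcm x y j) :
    IsRightLcm (c * x) (c * y) (c * j) := by
  obtain ⟨⟨d1, hd1⟩, ⟨d2, hd2⟩, hmin⟩ := h
  refine ⟨⟨d1, by rw [mul_assoc, ← hd1]⟩, ⟨d2, by rw [mul_assoc, ← hd2]⟩, ?_⟩
  intro m ⟨u, hu⟩ ⟨w, hw⟩
  have hm : m = c * (x * u) := by rw [hu, mul_assoc]
  have : x * u = y * w := by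
    apply hM.1 c
    rw [← mul_assoc, ← hu, hw, mul_assoc]
  obtain ⟨e, he⟩ := hmin (x * u) (ldvd_mul x u) ⟨w, this⟩
  exact ⟨e, by rw [hm, he, mul_assoc]⟩

theorem rlcmSet_of_mul (hM : IsLDM M) {s : Set M} {c j : M}
    (h : IsRightLcmSet ((c * ·) '' s) (c * j)) : IsRightLcmSet s j := by
  constructor
  · intro x hx
    obtain ⟨d, hd⟩ := h.1 (c * x) ⟨x, hx, rfl⟩
    exact ⟨d, hM.1 c _ _ (by rw [← mul_assoc]; exact hd)⟩
  · intro m hm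
    have : LDvd (c * j) (c * m) := by
      refine h.2 (c * m) ?_
      rintro _ ⟨x, hx, rfl⟩
      obtain ⟨d, hd⟩ := hm x hx
      exact ⟨d, by rw [hd, mul_assoc]⟩
    obtain ⟨d, hd⟩ := this
    exact ⟨d, hM.1 c _ _ (by rw [← mul_assoc]; exact hd)⟩

/-- `c` covers `x` with respect to left divisibility. -/
def MCov (x c : M) : Prop :=
  LDvd x c ∧ x ≠ c ∧ ∀ d, LDvd x d → LDvd d c → d = x ∨ d = c

theorem mcov_mul (hM : IsLDM M) (d : M) {x c : M} :
    MCov x c ↔ MCov (d * x) (d * c) := by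
  constructor
  · rintro ⟨⟨e, he⟩, hne, hbet⟩
    refine ⟨⟨e, by rw [he, mul_assoc]⟩, ?_, ?_⟩
    · intro hEq; exact hne (hM.1 d x c hEq)
    · rintro d₁ ⟨f, hf⟩ hd₁c
      have hf' : d₁ = d * (x * f) := by rw [hf, mul_assoc]
      have h1 : LDvd (x * f) c := by
        obtain ⟨g, hg⟩ := hd₁c
        exact ⟨g, hM.1 d _ _ (by rw [← mul_assoc, ← hf', hg])⟩
      rcases hbet (x * f) (ldvd_mul x f) h1 with h | h
      · left; rw [hf', h]
      · right; rw [hf', h]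
  · rintro ⟨⟨e, he⟩, hne, hbet⟩
    have hxc : LDvd x c := ⟨e, hM.1 d _ _ (by rw [← mul_assoc]; exact he)⟩
    refine ⟨hxc, ?_, ?_⟩
    · rintro rfl; exact hne rfl
    · intro d₀ hxd₀ hd₀c
      obtain ⟨f, hf⟩ := hxd₀
      have h1 : LDvd (d * x) (d * d₀) := ⟨f, by rw [hf, mul_assoc]⟩
      have h2 : LDvd (d * d₀) (d * c) := by
        obtain ⟨g, hg⟩ := hd₀c
        exact ⟨g, by rw [hg, mul_assoc]⟩
      rcases hbet (d * d₀) h1 h2 with h | h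
      · left; exact hM.1 d _ _ h
      · right; exact hM.1 d _ _ h

theorem cov1 (hM : IsLDM M) {z x q j : M} (hq : IsIrred q) (hqz : LDvd q z)
    (hxz : LDvd x z) (hj : IsRightLcm x q j) : j = x ∨ MCov x j := by
  by_cases hqx : LDvd q x
  · left; exact ldvd_antisymm hM (hj.2.2 x (ldvd_refl x) hqx) hj.1
  · right
    have hxj : LDvd x j := hj.1
    have hne : x ≠ j := by
      rintro rfl; exact hqx hj.2.1
    refine ⟨hxj, hne, ?_⟩
    intro d hxd hdj
    have hjz : LDvd j z := hj.2.2 z hxz hqz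
    have hdz : LDvd d z := ldvd_trans hdj hjz
    obtain ⟨i, hi⟩ := hM.2.2.2.2.2 z
    letI := i
    set X : {b : M // LDvd b z} := ⟨x, hxz⟩
    set Q : {b : M // LDvd b z} := ⟨q, hqz⟩
    set D : {b : M // LDvd b z} := ⟨d, hdz⟩
    set J : {b : M // LDvd b z} := ⟨j, hjz⟩
    have hJ : X ⊔ Q = J := by
      apply le_antisymm
      · exact sup_le ((hi X J).2 hj.1) ((hi Q J).2 hj.2.1)
      · exact (hi J (X ⊔ Q)).2 (hj.2.2 _ ((hi X (X ⊔ Q)).1 le_sup_left)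
          ((hi Q (X ⊔ Q)).1 le_sup_right))
    have hD : D = (D ⊓ X) ⊔ (D ⊓ Q) := by
      rw [← inf_sup_left, hJ, inf_eq_left.mpr ((hi D J).2 hdj)]
    have hDX : D ⊓ X = X := inf_eq_right.mpr ((hi X D).2 hxd)
    rcases ldvd_irred hq ((hi (D ⊓ Q) Q).1 inf_le_right) with h1 | h1
    · left
      have hB : D ⊓ Q ≤ X := (hi (D ⊓ Q) X).2 (by rw [h1]; exact one_ldvd x)
      have : D = X := by rw [hD, hDX, sup_eq_left.mpr hB]
      exact congrArg Subtype.val this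
    · right
      have hqd : LDvd q d := by
        have := (hi (D ⊓ Q) D).1 inf_le_left
        rwa [h1] at this
      exact ldvd_antisymm hM hdj (hj.2.2 d hxd hqd)

theorem cov2 (hM : IsLDM M) {z x c y j : M} (hxc : MCov x c) (hcz : LDvd c z)
    (hxy : LDvd x y) (hyz : LDvd y z) (hj : IsRightLcm y c j) : j = y ∨ MCov y j := by
  by_cases hcy : LDvd c y
  · left; exact ldvd_antisymm hM (hj.2.2 y (ldvd_refl y) hcy) hj.1
  · right
    have hne : y ≠ j := by rintro rfl; exact hcy hj.2.1
    refine ⟨hj.1, hne, ?_⟩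
    intro d hyd hdj
    have hjz : LDvd j z := hj.2.2 z hyz hcz
    have hdz : LDvd d z := ldvd_trans hdj hjz
    obtain ⟨i, hi⟩ := hM.2.2.2.2.2 z
    letI := i
    set Y : {b : M // LDvd b z} := ⟨y, hyz⟩
    set C : {b : M // LDvd b z} := ⟨c, hcz⟩
    set D : {b : M // LDvd b z} := ⟨d, hdz⟩
    set J : {b : M // LDvd b z} := ⟨j, hjz⟩
    have hJ : Y ⊔ C = J := by
      apply le_antisymm
      · exact sup_le ((hi Y J).2 hj.1) ((hi C J).2 hj.2.1)
      · exact (hi J (Y ⊔ C)).2 (hj.2.2 _ ((hi Y (Y ⊔ C)).1 le_sup_left)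
          ((hi C (Y ⊔ C)).1 le_sup_right))
    have hD : D = (D ⊓ Y) ⊔ (D ⊓ C) := by
      rw [← inf_sup_left, hJ, inf_eq_left.mpr ((hi D J).2 hdj)]
    have hDY : D ⊓ Y = Y := inf_eq_right.mpr ((hi Y D).2 hyd)
    have hxz : LDvd x z := ldvd_trans hxc.1 hcz
    have hxB : LDvd x (D ⊓ C).1 := by
      have : (⟨x, hxz⟩ : {b : M // LDvd b z}) ≤ D ⊓ C :=
        le_inf ((hi _ D).2 (ldvd_trans hxy hyd)) ((hi _ C).2 hxc.1)
      exact (hi _ _).1 this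
    rcases hxc.2.2 (D ⊓ C).1 hxB ((hi (D ⊓ C) C).1 inf_le_right) with h1 | h1
    · left
      have hB : D ⊓ C ≤ Y := (hi (D ⊓ C) Y).2 (by rw [h1]; exact hxy)
      have : D = Y := by rw [hD, hDY, sup_eq_left.mpr hB]
      exact congrArg Subtype.val this
    · right
      have hcd : LDvd c d := by
        have := (hi (D ⊓ C) D).1 inf_le_left
        rwa [h1] at this
      exact ldvd_antisymm hM hdj (hj.2.2 d hyd hcd)

end LDMAux
namespace LDMAux

variable {M : Type*} [Monoid M]

theorem hc_ldvd_aux (hM : IsLDM M) (s : Finset M) :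
    (∀ q ∈ s, IsIrred q) → ∀ j : M, IsRightLcmSet (s : Set M) j → ∀ x, LDvd x j → IsHypercube x := by
  classical
  induction s using Finset.induction_on with
  | empty =>
    intro _ j hj x hx
    have hj1 : LDvd j 1 := hj.2 1 (by simp)
    have hx1 : x = 1 := ldvd_antisymm hM (ldvd_trans hx hj1) (one_ldvd x)
    rw [hx1]; exact hypercube_one
  | @insert q s hqs ih =>
    intro hirr j hj x hx
    have hq : IsIrred q := hirr q (Finset.mem_insert_self q s)
    have hqj : LDvd q j := hj.1 q (by simp)
    have hsj : ∀ p ∈ s, LDvd p j := fun p hp => hj.1 p (by simp [hp])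
    obtain ⟨j', hj', hj'j⟩ := exists_rlcmFinset hM s hsj
    have hbin : IsRightLcm j' q j := by
      refine ⟨hj'j, hqj, ?_⟩
      intro m hj'm hqm
      refine hj.2 m ?_
      intro p hp
      rcases Finset.mem_insert.1 (by exact_mod_cast hp) with rfl | hp'
      · exact hqm
      · exact ldvd_trans (hj'.1 p (by exact_mod_cast hp')) hj'm
    obtain ⟨g, hg1, hg2, hg3⟩ := hM.2.2.2.1 x j'
    have hgj : LDvd g j := ldvd_trans hg2 hj'j
    -- lattice dip in divisors of j
    obtain ⟨i, hi⟩ := hM.2.2.2.2.2 j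
    letI := i
    set X : {b : M // LDvd b j} := ⟨x, hx⟩ with hX
    set Q : {b : M // LDvd b j} := ⟨q, hqj⟩ with hQ
    set J' : {b : M // LDvd b j} := ⟨j', hj'j⟩ with hJ'
    set G : {b : M // LDvd b j} := ⟨g, hgj⟩ with hG
    set JJ : {b : M // LDvd b j} := ⟨j, ldvd_refl j⟩ with hJJ
    have hsup : J' ⊔ Q = JJ := by
      apply le_antisymm
      · exact sup_le ((hi J' JJ).2 hj'j) ((hi Q JJ).2 hqj)
      · exact (hi JJ _).2 (hbin.2.2 _ ((hi J' _).1 le_sup_left) ((hi Q _).1 le_sup_right))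
    have hXd : X = (X ⊓ J') ⊔ (X ⊓ Q) := by
      rw [← inf_sup_left, hsup, inf_eq_left.mpr ((hi X JJ).2 hx)]
    have hXJ' : X ⊓ J' = G := by
      apply le_antisymm
      · exact (hi _ G).2 (hg3 _ ((hi (X ⊓ J') X).1 inf_le_left)
          ((hi (X ⊓ J') J').1 inf_le_right))
      · exact le_inf ((hi G X).2 hg1) ((hi G J').2 hg2)
    have hghc : IsHypercube g := ih (fun p hp => hirr p (by simp [hp])) j' hj' g hg2
    rcases ldvd_irred hq ((hi (X ⊓ Q) Q).1 inf_le_right) with h1 | h1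
    · have hB : X ⊓ Q ≤ G := (hi _ G).2 (by rw [h1]; exact one_ldvd g)
      have hXG : X = G := by rw [hXd, hXJ', sup_eq_left.mpr hB]
      have : x = g := congrArg Subtype.val hXG
      rw [this]; exact hghc
    · have hBQ : X ⊓ Q = Q := Subtype.ext h1
      have hXGQ : X = G ⊔ Q := by rw [hXd, hXJ', hBQ]
      obtain ⟨j₂, hj₂, hj₂j⟩ := exists_rlcm hM hgj hqj
      have hj₂x : j₂ = x := by
        have : (⟨j₂, hj₂j⟩ : {b : M // LDvd b j}) = G ⊔ Q := by
          apply le_antisymm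
          · exact (hi _ _).2 (hj₂.2.2 _ ((hi G _).1 le_sup_left) ((hi Q _).1 le_sup_right))
          · exact sup_le ((hi G _).2 hj₂.1) ((hi Q _).2 hj₂.2.1)
        have := this.trans hXGQ.symm
        exact congrArg Subtype.val this
      rw [← hj₂x] at hx ⊢
      obtain ⟨S₁, hS₁i, hS₁⟩ := hghc
      refine ⟨insert q S₁, ?_, ?_, ?_⟩
      · intro p hp
        rcases Finset.mem_insert.1 hp with rfl | hp'
        · exact hq
        · exact hS₁i p hp'
      · intro p hp
        rcases Finset.mem_insert.1 (by exact_mod_cast hp) with rfl | hp'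
        · exact hj₂.2.1
        · exact ldvd_trans (hS₁.1 p (by exact_mod_cast hp')) hj₂.1
      · intro m hm
        refine hj₂.2.2 m (hS₁.2 m ?_) (hm q (by simp))
        intro p hp
        refine hm p ?_
        simp only [Finset.coe_insert, Set.mem_insert_iff]
        right; exact_mod_cast hp

theorem hc_ldvd (hM : IsLDM M) {h x : M} (hh : IsHypercube h) (hx : LDvd x h) :
    IsHypercube x := by
  obtain ⟨s, hsi, hs⟩ := hh
  exact hc_ldvd_aux hM s hsi h hs x hx

theorem hc_rdvd (hM : IsLDM M) {h w : M} (hh : IsHypercube h) (hw : RDvd w h) :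
    IsHypercube w := by
  classical
  obtain ⟨x, rfl⟩ := hw
  obtain ⟨s, hsi, hs⟩ := hh
  set S : Set M := {d | MCov x (x * d) ∧ LDvd (x * d) (x * w)} with hSdef
  have hfin : S.Finite := by
    have hinj : Function.Injective (fun d : M => x * d) := fun a b hab => hM.1 x a b hab
    have h1 : ((fun d : M => x * d) ⁻¹' {b | LDvd b (x * w)}).Finite :=
      Set.Finite.preimage (hinj.injOn) (hM.2.2.2.2.1 (x * w))
    exact h1.subset (fun d hd => hd.2)
  refine ⟨hfin.toFinset, ?_, ?_, ?_⟩
  · intro d hd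
    rw [Set.Finite.mem_toFinset] at hd
    obtain ⟨⟨hxd, hne, hbet⟩, hdh⟩ := hd
    constructor
    · rintro rfl; exact hne (mul_one x).symm
    · intro b c hbc
      have h1 : LDvd (x * b) (x * d) := ⟨c, by rw [hbc, mul_assoc]⟩
      rcases hbet (x * b) (ldvd_mul x b) h1 with h2 | h2
      · left; exact hM.1 x b 1 (by rw [mul_one]; exact h2)
      · right
        have hbd : b = d := hM.1 x b d h2
        refine hM.1 b c 1 ?_
        rw [mul_one, ← hbc, hbd]
  · intro d hd
    rw [Finset.mem_coe, Set.Finite.mem_toFinset] at hd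
    obtain ⟨e, he⟩ := hd.2
    exact ⟨e, hM.1 x _ _ (by rw [← mul_assoc]; exact he)⟩
  · intro m hm
    have hqm : ∀ p ∈ s, LDvd p (x * m) := by
      intro p hp
      have hpz : LDvd p (x * w) := hs.1 p (by exact_mod_cast hp)
      obtain ⟨jp, hjp, hjpz⟩ := exists_rlcm hM (ldvd_mul x w) hpz
      rcases cov1 hM (hsi p hp) hpz (ldvd_mul x w) hjp with h1 | h1
      · exact ldvd_trans hjp.2.1 (h1 ▸ ldvd_mul x m)
      · obtain ⟨u, hu⟩ := hjp.1
        have huS : u ∈ S := by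
          refine ⟨hu ▸ h1, hu ▸ hjpz⟩
        have hum : LDvd u m := hm u (by rw [Finset.mem_coe, Set.Finite.mem_toFinset]; exact huS)
        obtain ⟨e, he⟩ := hum
        have : LDvd jp (x * m) := ⟨e, by rw [hu, he, mul_assoc]⟩
        exact ldvd_trans hjp.2.1 this
    have hhm : LDvd (x * w) (x * m) := hs.2 (x * m) hqm
    obtain ⟨e, he⟩ := hhm
    exact ⟨e, hM.1 x _ _ (by rw [← mul_assoc]; exact he)⟩

theorem quot_left (hM : IsLDM M) {hmap : M → M} (hspec : ∀ a : M, IsMaxHC a (hmap a))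
    {s t g : M} (ht : IsHypercube t) (hg : s * t = g * hmap (s * t)) : LDvd g s := by
  obtain ⟨w, hwt⟩ := hmap_max hspec ht (rdvd_mul s t)
  refine ⟨w, ?_⟩
  apply hM.2.1 t
  rw [hg, hwt, ← mul_assoc]

end LDMAux
namespace LDMAux

variable {M : Type*} [Monoid M]

/-- `u` is the right lcm of `x` together with all covers of `x` dividing `u`. -/
def PP (x u : M) : Prop :=
  IsRightLcmSet ({x} ∪ {c | MCov x c ∧ LDvd c u}) u

theorem mcov_mul_irred (hM : IsLDM M) {q : M} (x : M) (hq : IsIrred q) :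
    MCov x (x * q) := by
  refine ⟨ldvd_mul x q, ?_, ?_⟩
  · intro hEq
    exact hq.1 (hM.1 x q 1 (by rw [mul_one, ← hEq]))
  · rintro d ⟨e, rfl⟩ hdq
    obtain ⟨f, hf⟩ := hdq
    have hef : e * f = q := (hM.1 x _ _ (by rw [← mul_assoc]; exact hf.symm))
    rcases ldvd_irred hq ⟨f, hef.symm⟩ with h | h
    · left; rw [h, mul_one]
    · right; rw [h]

theorem PP_quot (hM : IsLDM M) {hmap : M → M} (hspec : ∀ a : M, IsMaxHC a (hmap a))
    {u x : M} (hx : u = x * hmap u) : PP x u := by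
  constructor
  · rintro c (rfl | hc)
    · exact ⟨hmap u, hx⟩
    · exact hc.2
  · intro m hm
    obtain ⟨m', rfl⟩ := hm x (Or.inl rfl)
    obtain ⟨s, hsi, hs⟩ := hmap_hc hspec u
    have hq : ∀ p ∈ s, LDvd p m' := by
      intro p hp
      have hpi := hsi p hp
      have hpdvd : LDvd (x * p) u := by
        obtain ⟨e, he⟩ := hs.1 p (by exact_mod_cast hp)
        exact ⟨e, by rw [hx, he, mul_assoc]⟩
      have h1 : LDvd (x * p) (x * m') :=
        hm (x * p) (Or.inr ⟨mcov_mul_irred hM x hpi, hpdvd⟩)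
      obtain ⟨e, he⟩ := h1
      exact ⟨e, hM.1 x _ _ (by rw [← mul_assoc]; exact he)⟩
    have : LDvd (hmap u) m' := hs.2 m' hq
    obtain ⟨e, he⟩ := this
    exact ⟨e, by rw [hx, he, mul_assoc]⟩

theorem PP_least (hM : IsLDM M) {hmap : M → M} (hspec : ∀ a : M, IsMaxHC a (hmap a))
    {u x : M} (hP : PP x u) {x₀ : M} (hx₀ : u = x₀ * hmap u) : LDvd x₀ x := by
  classical
  obtain ⟨k', hk'⟩ := hP.1 x (Or.inl rfl)
  -- k' is a hypercube
  set S : Set M := {d | MCov x (x * d) ∧ LDvd (x * d) u} with hSdef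
  have hfin : S.Finite := by
    have hinj : Function.Injective (fun d : M => x * d) := fun a b hab => hM.1 x a b hab
    have h1 : ((fun d : M => x * d) ⁻¹' {b | LDvd b u}).Finite :=
      Set.Finite.preimage (hinj.injOn) (hM.2.2.2.2.1 u)
    exact h1.subset (fun d hd => hd.2)
  have hk'hc : IsHypercube k' := by
    refine ⟨hfin.toFinset, ?_, ?_, ?_⟩
    · intro d hd
      rw [Set.Finite.mem_toFinset] at hd
      obtain ⟨⟨hxd, hne, hbet⟩, hdh⟩ := hd
      constructor
      · rintro rfl; exact hne (mul_one x).symm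
      · intro b c hbc
        have h1 : LDvd (x * b) (x * d) := ⟨c, by rw [hbc, mul_assoc]⟩
        rcases hbet (x * b) (ldvd_mul x b) h1 with h2 | h2
        · left; exact hM.1 x b 1 (by rw [mul_one]; exact h2)
        · right
          have hbd : b = d := hM.1 x b d h2
          refine hM.1 b c 1 ?_
          rw [mul_one, ← hbc, hbd]
    · intro d hd
      rw [Finset.mem_coe, Set.Finite.mem_toFinset] at hd
      obtain ⟨e, he⟩ := hd.2
      exact ⟨e, hM.1 x _ _ (by rw [← mul_assoc, ← hk']; exact he)⟩
    · intro m hm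
      have humx : LDvd u (x * m) := by
        refine hP.2 (x * m) ?_
        rintro c (rfl | hc)
        · exact ldvd_mul c m
        · obtain ⟨d, rfl⟩ := hc.1.1
          have hdS : d ∈ S := ⟨hc.1, hc.2⟩
          have : LDvd d m := hm d (by rw [Finset.mem_coe, Set.Finite.mem_toFinset]; exact hdS)
          obtain ⟨e, he⟩ := this
          exact ⟨e, by rw [he, mul_assoc]⟩
      obtain ⟨e, he⟩ := humx
      exact ⟨e, hM.1 x _ _ (by rw [← mul_assoc, ← hk']; exact he)⟩
  have hrd : RDvd k' (hmap u) := hmap_max hspec hk'hc ⟨x, hk'⟩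
  obtain ⟨e, he⟩ := hrd
  refine ⟨e, ?_⟩
  apply hM.2.1 k'
  rw [← hk', hx₀, he, ← mul_assoc]

theorem PP_mono (hM : IsLDM M) {x y u : M} (hP : PP x u) (hxy : LDvd x y)
    (hyu : LDvd y u) : PP y u := by
  constructor
  · rintro c (rfl | hc)
    · exact hyu
    · exact hc.2
  · intro m hm
    have hym : LDvd y m := hm y (Or.inl rfl)
    refine hP.2 m ?_
    rintro c (rfl | hc)
    · exact ldvd_trans hxy hym
    · obtain ⟨j, hj, hju⟩ := exists_rlcm hM hyu hc.2
      rcases cov2 hM hc.1 hc.2 hxy hyu hj with h1 | h1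
      · exact ldvd_trans hj.2.1 (h1 ▸ hym)
      · exact ldvd_trans hj.2.1 (hm j (Or.inr ⟨h1, hju⟩))

theorem PP_of_mul (hM : IsLDM M) {d x u : M} (h : PP (d * x) (d * u)) : PP x u := by
  have hset : ({d * x} ∪ {c | MCov (d * x) c ∧ LDvd c (d * u)} : Set M)
      = (d * ·) '' ({x} ∪ {c | MCov x c ∧ LDvd c u}) := by
    ext c
    constructor
    · rintro (rfl | hc)
      · exact ⟨x, Or.inl rfl, rfl⟩
      · obtain ⟨e, rfl⟩ := hc.1.1
        have h1 : MCov x (x * e) := by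
          have := hc.1
          rw [mul_assoc] at this
          exact (mcov_mul hM d).2 this
        have h2 : LDvd (x * e) u := by
          have := hc.2
          rw [mul_assoc] at this
          obtain ⟨f, hf⟩ := this
          exact ⟨f, hM.1 d _ _ (by rw [← mul_assoc]; exact hf)⟩
        exact ⟨x * e, Or.inr ⟨h1, h2⟩, by rw [mul_assoc]⟩
    · rintro ⟨w, (rfl | hw), rfl⟩
      · exact Or.inl rfl
      · refine Or.inr ⟨(mcov_mul hM d).1 hw.1, ?_⟩
        obtain ⟨f, hf⟩ := hw.2
        exact ⟨f, by rw [hf, mul_assoc]⟩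
  unfold PP at h
  rw [hset] at h
  exact rlcmSet_of_mul hM h

theorem quot_mono_q (hM : IsLDM M) {hmap : M → M} (hspec : ∀ a : M, IsMaxHC a (hmap a))
    {a q x x₁ : M} (hq : IsIrred q) (hx : a = x * hmap a)
    (hx₁ : a * q = x₁ * hmap (a * q)) : LDvd x x₁ := by
  obtain ⟨k₂, hk₂⟩ := hmap_max hspec (irred_hypercube hq) (rdvd_mul a q)
  have hk₂hc : IsHypercube k₂ := hc_ldvd hM (hmap_hc hspec (a * q)) ⟨q, hk₂⟩
  have ha : a = x₁ * k₂ := by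
    apply hM.2.1 q
    rw [hx₁, hk₂, ← mul_assoc]
  obtain ⟨e, he⟩ := hmap_max hspec hk₂hc ⟨x₁, ha⟩
  refine ⟨e, ?_⟩
  apply hM.2.1 k₂
  rw [← ha, hx, he, ← mul_assoc]

theorem quot_mono_list (hM : IsLDM M) {hmap : M → M} (hspec : ∀ a : M, IsMaxHC a (hmap a))
    (l : List M) (hl : ∀ q ∈ l, IsIrred q) :
    ∀ a x y : M, a = x * hmap a → a * l.prod = y * hmap (a * l.prod) → LDvd x y := by
  induction l with
  | nil =>
    intro a x y hx hy
    rw [List.prod_nil, mul_one] at hy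
    have : x = y := hM.2.1 (hmap a) x y (by rw [← hx, ← hy])
    exact this ▸ ldvd_refl x
  | cons q l ih =>
    intro a x y hx hy
    have hq : IsIrred q := hl q List.mem_cons_self
    obtain ⟨x₁, hx₁⟩ := hmap_rdvd hspec (a * q)
    have h1 : LDvd x x₁ := quot_mono_q hM hspec hq hx hx₁
    have h2 : LDvd x₁ y := by
      refine ih (fun p hp => hl p (List.mem_cons_of_mem q hp)) (a * q) x₁ y hx₁ ?_
      rw [List.prod_cons, ← mul_assoc] at hy
      exact hy
    exact ldvd_trans h1 h2

theorem quot_mono (hM : IsLDM M) {hmap : M → M} (hspec : ∀ a : M, IsMaxHC a (hmap a))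
    {a c x y : M} (hx : a = x * hmap a) (hy : a * c = y * hmap (a * c)) : LDvd x y := by
  obtain ⟨l, hl, rfl⟩ := exists_factorization hM c
  exact quot_mono_list hM hspec l hl a x y hx hy

theorem hA1 (hM : IsLDM M) {hmap : M → M} (hspec : ∀ a : M, IsMaxHC a (hmap a))
    (a : M) {q : M} (hq : IsIrred q) : hmap (a * q) = hmap (hmap a * q) := by
  obtain ⟨k₂, hk₂⟩ := hmap_max hspec (irred_hypercube hq) (rdvd_mul a q)
  obtain ⟨x₁, hx₁⟩ := hmap_rdvd hspec (a * q)
  have hk₂hc : IsHypercube k₂ := hc_ldvd hM (hmap_hc hspec (a * q)) ⟨q, hk₂⟩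
  have ha : a = x₁ * k₂ := by
    apply hM.2.1 q
    rw [hx₁, hk₂, ← mul_assoc]
  obtain ⟨e, he⟩ := hmap_max hspec hk₂hc ⟨x₁, ha⟩
  apply rdvd_antisymm hM
  · -- hmap (a*q) right-divides hmap a * q, hence divides the rhs hmap
    refine hmap_max hspec (hmap_hc hspec (a * q)) ⟨e, ?_⟩
    rw [he, hk₂, mul_assoc]
  · -- rhs hmap right-divides a * q, hence divides hmap (a*q)
    obtain ⟨a₁, ha₁⟩ := hmap_rdvd hspec a
    refine hmap_max hspec (hmap_hc hspec (hmap a * q)) ?_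
    refine rdvd_trans (hmap_rdvd hspec (hmap a * q)) ⟨a₁, ?_⟩
    rw [← mul_assoc, ← ha₁]

theorem hA_list (hM : IsLDM M) {hmap : M → M} (hspec : ∀ a : M, IsMaxHC a (hmap a))
    (l : List M) (hl : ∀ q ∈ l, IsIrred q) :
    ∀ a : M, hmap (a * l.prod) = hmap (hmap a * l.prod) := by
  induction l with
  | nil =>
    intro a
    rw [List.prod_nil, mul_one, mul_one, hmap_eq_self hM hspec (hmap_hc hspec a)]
  | cons q l ih =>
    intro a
    have hq : IsIrred q := hl q List.mem_cons_self
    have hl' : ∀ p ∈ l, IsIrred p := fun p hp => hl p (List.mem_cons_of_mem q hp)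
    rw [List.prod_cons, ← mul_assoc, ih (fun p hp => hl' p hp) (a * q) , hA1 hM hspec a hq,
      ← ih (fun p hp => hl' p hp) (hmap a * q), mul_assoc]

theorem hA (hM : IsLDM M) {hmap : M → M} (hspec : ∀ a : M, IsMaxHC a (hmap a))
    (a b : M) : hmap (a * b) = hmap (hmap a * b) := by
  obtain ⟨l, hl, rfl⟩ := exists_factorization hM b
  exact hA_list hM hspec l hl a

end LDMAux
namespace LDMAux

variable {M : Type*} [Monoid M]

theorem crux (hM : IsLDM M) {hmap : M → M} (hspec : ∀ a : M, IsMaxHC a (hmap a))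
    {s t r v g v' g' : M} (hs : IsHypercube s) (hr : IsHypercube r)
    (htr : hmap (t * r) = r)
    (hv : v = hmap (s * t)) (hg : s * t = g * v)
    (hv' : v' = hmap (v * r)) (hg' : v * r = g' * v') :
    hmap (g * g') = g' := by
  obtain ⟨v₃, hv₃⟩ : RDvd r v' := by
    rw [hv']; exact hmap_max hspec hr (rdvd_mul v r)
  have hgv : g' * v₃ = v := by
    apply hM.2.1 r
    rw [mul_assoc, ← hv₃, ← hg']
  have hZ : hmap (s * t * r) = v' := by
    rw [hA hM hspec (s * t) r, ← hv, ← hv']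
  have hZG : s * t * r = (g * g') * v' := by
    rw [hg, mul_assoc, hg', ← mul_assoc]
  have hGst : (g * g') * v₃ = s * t := by
    rw [mul_assoc, hgv, ← hg]
  obtain ⟨xG, hxG⟩ := hmap_rdvd hspec (g * g')
  have h6 : (g * g') * v₃ = g * hmap ((g * g') * v₃) := by
    rw [hGst, ← hv]; exact hg
  have hxGg : LDvd xG g := quot_mono hM hspec hxG h6
  have hsst : LDvd s (s * t) := ldvd_mul s t
  have hGst' : LDvd (g * g') (s * t) := ⟨v₃, hGst.symm⟩
  obtain ⟨j, hj, hjst⟩ := exists_rlcm hM hsst hGst'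
  have hPPG : PP (g * g') (s * t * r) := by
    refine PP_quot hM hspec ?_
    rw [hZ]; exact hZG
  have hPPj : PP j (s * t * r) :=
    PP_mono hM hPPG hj.2.1 (ldvd_trans hjst (ldvd_mul (s * t) r))
  obtain ⟨t₄, ht₄⟩ := hj.1
  have hPPt₄ : PP t₄ (t * r) := by
    refine PP_of_mul hM (d := s) ?_
    rw [← ht₄, ← mul_assoc]
    exact hPPj
  have htt₄ : LDvd t t₄ := by
    refine PP_least hM hspec hPPt₄ ?_
    rw [htr]
  have hjeq : j = s * t := by
    obtain ⟨e, he⟩ := htt₄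
    refine ldvd_antisymm hM hjst ⟨e, ?_⟩
    rw [ht₄, he, ← mul_assoc]
  rw [hjeq] at hj
  -- F2 : PP xG (s * t)
  have hxGst : LDvd xG (s * t) := ldvd_trans ⟨hmap (g * g'), hxG⟩ hGst'
  have hPPxG : PP xG (s * t) := by
    constructor
    · rintro c (rfl | hc)
      · exact hxGst
      · exact hc.2
    · intro m hm
      have hxGm : LDvd xG m := hm xG (Or.inl rfl)
      have hGm : LDvd (g * g') m := by
        refine (PP_quot hM hspec hxG).2 m ?_
        rintro c (rfl | hc)
        · exact hxGm
        · exact hm c (Or.inr ⟨hc.1, ldvd_trans hc.2 hGst'⟩)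
      have hsm : LDvd s m := by
        obtain ⟨ss, hssi, hss⟩ := hs
        refine hss.2 m ?_
        intro q hq
        have hqst : LDvd q (s * t) := ldvd_trans (hss.1 q hq) hsst
        obtain ⟨jq, hjq, hjqst⟩ := exists_rlcm hM hxGst hqst
        rcases cov1 hM (hssi q (by exact_mod_cast hq)) hqst hxGst hjq with h1 | h1
        · exact ldvd_trans hjq.2.1 (h1 ▸ hxGm)
        · exact ldvd_trans hjq.2.1 (hm jq (Or.inr ⟨h1, hjqst⟩))
      exact hj.2.2 m hsm hGm
  have hgxG : LDvd g xG := by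
    refine PP_least hM hspec hPPxG ?_
    rw [← hv]; exact hg
  have hEq : xG = g := ldvd_antisymm hM hxGg hgxG
  have hxG' := hxG
  rw [hEq] at hxG'
  exact hM.1 g _ _ hxG'.symm

end LDMAux
namespace LDMAux

variable {M : Type*} [Monoid M]

theorem RNF_build (hM : IsLDM M) {hmap : M → M} (hspec : ∀ a : M, IsMaxHC a (hmap a))
    (k : ℕ) (f : ℕ → M) (e : M)
    (hf : ∀ j, j < k → IsHypercube (f j) ∧ f j ≠ 1)
    (he : IsHypercube e) (hne : e ≠ 1)
    (hpair : ∀ j, j + 1 < k → hmap (f j * f (j + 1)) = f (j + 1))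
    (hlast : 1 ≤ k → hmap (f (k - 1) * e) = e) :
    IsRNF hmap ((List.ofFn fun j : Fin k => f j) ++ [e]) := by
  set K : List M := (List.ofFn fun j : Fin k => f j) ++ [e] with hK
  have hlen : K.length = k + 1 := by simp [hK]
  have hgetlt : ∀ (n : ℕ), n < k → ∀ (h : n < K.length), K[n] = f n := by
    intro n hn h
    have h' : n < (List.ofFn fun j : Fin k => f j).length := by simpa using hn
    exact (List.getElem_append_left h').trans (by simp)
  have hgetk : ∀ (h : k < K.length), K[k] = e := by
    intro h
    exact (List.getElem_append_right (by simp)).trans (by simp)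
  constructor
  · intro x hx
    rw [hK, List.mem_append] at hx
    rcases hx with hx | hx
    · obtain ⟨j, hj⟩ := List.mem_ofFn.1 hx
      exact hj ▸ hf j j.2
    · rw [List.mem_singleton] at hx
      exact hx ▸ ⟨he, hne⟩
  · intro n
    induction n with
    | zero =>
      intro hn
      rw [List.get_eq_getElem, List.prod_take_succ K 0 hn, List.take_zero, List.prod_nil, one_mul]
      rcases Nat.eq_zero_or_pos k with hk | hk
      · subst hk
        rw [hgetk (by omega)]
        exact hmap_eq_self hM hspec he
      · rw [hgetlt 0 hk]
        exact hmap_eq_self hM hspec (hf 0 hk).1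
    | succ n ih =>
      intro hn
      have hn' : n < K.length := by omega
      have ihn := ih hn'
      rw [List.get_eq_getElem] at ihn ⊢
      rw [List.prod_take_succ K (n + 1) hn, hA hM hspec, ihn]
      rcases Nat.lt_or_ge (n + 1) k with hlt | hge
      · rw [hgetlt n (by omega), hgetlt (n + 1) hlt]
        exact hpair n hlt
      · have hk1 : n + 1 = k := by rw [hlen] at hn; omega
        subst hk1
        rw [hgetlt n (by omega), hgetk (by omega)]
        have h1 : n + 1 - 1 = n := by omega
        rw [← h1]
        exact hlast (by omega)

end LDMAux
namespace LDMAux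

variable {M : Type*} [Monoid M]

theorem ofFn_shift (k : ℕ) (g : ℕ → M) :
    (List.ofFn fun j : Fin (k + 1) => g j) = g 0 :: List.ofFn fun j : Fin k => g (j + 1) := by
  rw [List.ofFn_succ]
  simp [Fin.val_succ]

end LDMAux

open LDMAux in
/-- Proposition 24(i): the right normal form of `y * a` from that of `a`,
via `y_m = y`, `y_{i-1} = h(y_i h_i)` and `y_i h_i = h'_i y_{i-1}`. -/
theorem stmt_11 {M : Type*} [Monoid M] [DecidableEq M] (hM : IsLDM M)
    (hmap : M → M) (hspec : ∀ a : M, IsMaxHC a (hmap a))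
    (L : List M) (hrnf : IsRNF hmap L) (a : M) (ha : a = L.prod)
    (y : M) (hy : IsHypercube y) :
    ∀ Y H' : ℕ → M, Y L.length = y →
      (∀ i (h1 : 1 ≤ i) (h2 : i ≤ L.length),
        Y (i - 1) = hmap (Y i * L.get ⟨L.length - i, by omega⟩) ∧
        Y i * L.get ⟨L.length - i, by omega⟩ = H' i * Y (i - 1)) →
      (∀ i, 1 ≤ i → i ≤ L.length → IsHypercube (H' i)) ∧ IsHypercube (Y 0) ∧
      IsRNF hmap
        (((List.ofFn fun j : Fin L.length => H' (L.length - (j : ℕ))) ++ [Y 0]).filter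
          (fun x => decide (x ≠ 1))) ∧
      ((((List.ofFn fun j : Fin L.length => H' (L.length - (j : ℕ))) ++ [Y 0]).filter
          (fun x => decide (x ≠ 1))).prod = y * a) := by
  intro Y H' hYp hrec
  open LDMAux in
  set p := L.length with hpdef
  set el : ℕ → M := fun n => L.getD n 1 with heldef
  have hel : ∀ (n : ℕ) (hn : n < p), L.get ⟨n, hn⟩ = el n := by
    intro n hn
    rw [List.get_eq_getElem, heldef]
    exact (List.getD_eq_getElem L 1 hn).symm
  have f1 : ∀ n, n < p → IsHypercube (el n) ∧ el n ≠ 1 := by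
    intro n hn
    have := hrnf.1 (L.get ⟨n, hn⟩) (List.get_mem L ⟨n, hn⟩)
    rwa [hel n hn] at this
  have f2 : ∀ (n : ℕ) (hn : n < p), hmap ((L.take (n + 1)).prod) = el n := by
    intro n hn
    rw [← hel n hn]
    exact hrnf.2 n hn
  have hrecY : ∀ i, 1 ≤ i → i ≤ p → Y (i - 1) = hmap (Y i * el (p - i)) := by
    intro i h1 h2
    have := (hrec i h1 h2).1
    rwa [hel (p - i) (by omega)] at this
  have hrecH : ∀ i, 1 ≤ i → i ≤ p → Y i * el (p - i) = H' i * Y (i - 1) := by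
    intro i h1 h2
    have := (hrec i h1 h2).2
    rwa [hel (p - i) (by omega)] at this
  have f5 : ∀ i, i ≤ p → IsHypercube (Y i) := by
    intro i hi
    rcases Nat.lt_or_ge i p with hlt | hge
    · have := hrecY (i + 1) (by omega) (by omega)
      have h0 : i + 1 - 1 = i := rfl
      rw [h0] at this
      rw [this]
      exact hmap_hc hspec _
    · have : i = p := by omega
      rw [this, hYp]
      exact hy
  have f6 : ∀ i, 1 ≤ i → i ≤ p →
      IsHypercube (H' i) ∧ ∃ ei, Y (i - 1) = ei * el (p - i) ∧ Y i = H' i * ei := by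
    intro i h1 h2
    have hhi : IsHypercube (el (p - i)) := (f1 (p - i) (by omega)).1
    have hrd : RDvd (el (p - i)) (Y (i - 1)) := by
      rw [hrecY i h1 h2]
      exact hmap_max hspec hhi (rdvd_mul _ _)
    obtain ⟨ei, hei⟩ := hrd
    have hYi : Y i = H' i * ei := by
      apply hM.2.1 (el (p - i))
      rw [hrecH i h1 h2, hei, ← mul_assoc]
    exact ⟨hc_ldvd hM (f5 i h2) ⟨ei, hYi⟩, ei, hei, hYi⟩
  have f3 : ∀ n, n + 1 < p → hmap (el n * el (n + 1)) = el (n + 1) := by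
    intro n hn
    have h2 := f2 (n + 1) hn
    rw [List.prod_take_succ L (n + 1) hn, hA hM hspec, f2 n (by omega)] at h2
    have hel' : L[n + 1]'hn = el (n + 1) := (List.getD_eq_getElem L 1 hn).symm
    rwa [hel'] at h2
  have f7 : ∀ i, 1 ≤ i → i + 1 ≤ p → hmap (H' (i + 1) * H' i) = H' i := by
    intro i h1 h2
    have htr : hmap (el (p - (i + 1)) * el (p - i)) = el (p - i) := by
      have := f3 (p - (i + 1)) (by omega)
      rwa [show p - (i + 1) + 1 = p - i by omega] at this
    have h0 : i + 1 - 1 = i := rfl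
    have hv : Y i = hmap (Y (i + 1) * el (p - (i + 1))) := by
      have := hrecY (i + 1) (by omega) h2
      rwa [h0] at this
    have hg : Y (i + 1) * el (p - (i + 1)) = H' (i + 1) * Y i := by
      have := hrecH (i + 1) (by omega) h2
      rwa [h0] at this
    exact crux hM hspec (f5 (i + 1) h2) (f1 (p - i) (by omega)).1 htr
      hv hg (hrecY i h1 (by omega)) (hrecH i h1 (by omega))
  have f8 : 1 ≤ p → hmap (H' 1 * Y 0) = Y 0 := by
    intro h1
    have ha' := hrecH 1 (le_refl 1) h1
    have hb' := hrecY 1 (le_refl 1) h1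
    rw [show (1 : ℕ) - 1 = 0 from rfl] at ha' hb'
    rw [← ha', ← hb']
  have f9 : 1 ≤ p → Y 0 ≠ 1 := by
    intro h1 h0
    obtain ⟨-, e1, he1, -⟩ := f6 1 (le_refl 1) h1
    rw [show (1 : ℕ) - 1 = 0 from rfl, h0] at he1
    exact (f1 (p - 1) (by omega)).2 (mul_eq_one_iff hM he1.symm).2
  have f10 : ∀ i, 1 ≤ i → i + 1 ≤ p → H' i ≠ 1 := by
    intro i h1 h2 hH
    obtain ⟨-, e2, he2, hY2⟩ := f6 (i + 1) (by omega) h2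
    rw [show i + 1 - 1 = i from rfl] at he2
    have hYi1 : Y i * el (p - i) = Y (i - 1) := by
      rw [hrecH i h1 (by omega), hH, one_mul]
    have hK : Y (i - 1) = e2 * (el (p - (i + 1)) * el (p - i)) := by
      rw [← hYi1, he2, mul_assoc]
    have hKhc : IsHypercube (el (p - (i + 1)) * el (p - i)) :=
      hc_rdvd hM (f5 (i - 1) (by omega)) ⟨e2, hK⟩
    have hlt1 : p - i < L.length := by omega
    have hlt2 : p - (i + 1) < L.length := by omega
    have hTa : (L.take (p - i + 1)).prod = (L.take (p - i)).prod * el (p - i) := by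
      rw [List.prod_take_succ L (p - i) hlt1]
      congr 1
      exact (List.getD_eq_getElem L 1 hlt1).symm
    have hTb : (L.take (p - i)).prod = (L.take (p - (i + 1))).prod * el (p - (i + 1)) := by
      have h := List.prod_take_succ L (p - (i + 1)) hlt2
      rw [show p - (i + 1) + 1 = p - i by omega] at h
      rw [h]
      congr 1
      exact (List.getD_eq_getElem L 1 hlt2).symm
    have hT : (L.take (p - i + 1)).prod
        = (L.take (p - (i + 1))).prod * (el (p - (i + 1)) * el (p - i)) := by
      rw [hTa, hTb, mul_assoc]
    have hrdT : RDvd (el (p - (i + 1)) * el (p - i)) ((L.take (p - i + 1)).prod) :=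
      ⟨(L.take (p - (i + 1))).prod, hT⟩
    have hmax := hmap_max hspec hKhc hrdT
    rw [f2 (p - i) (by omega)] at hmax
    obtain ⟨w, hw⟩ := hmax
    have : w * el (p - (i + 1)) = 1 := by
      apply hM.2.1 (el (p - i))
      rw [one_mul, mul_assoc, ← hw]
    exact (f1 (p - (i + 1)) (by omega)).2 (mul_eq_one_iff hM this).2
  have f11 : ∀ i, i ≤ p →
      (List.ofFn fun j : Fin i => H' (i - (j : ℕ))).prod * Y 0
        = Y i * (L.drop (p - i)).prod := by
    intro i
    induction i with
    | zero =>
      intro _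
      simp only [List.ofFn_zero, List.prod_nil, one_mul, Nat.sub_zero]
      rw [hpdef, List.drop_length, List.prod_nil, mul_one]
    | succ i ih =>
      intro hi
      rw [ofFn_shift i (fun n => H' (i + 1 - n))]
      have hfun : (List.ofFn fun j : Fin i => H' (i + 1 - ((j : ℕ) + 1)))
          = List.ofFn fun j : Fin i => H' (i - (j : ℕ)) := by
        congr 1
        funext j
        congr 1
        omega
      rw [List.prod_cons, hfun, Nat.sub_zero, mul_assoc, ih (by omega)]
      have hstep : el (p - (i + 1)) * (L.drop (p - i)).prod = (L.drop (p - (i + 1))).prod := by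
        rw [List.drop_eq_getElem_cons (show p - (i + 1) < p by omega) (l := L)]
        rw [List.prod_cons]
        have hlt2 : p - (i + 1) < L.length := by omega
        have e1 : L[p - (i + 1)]'hlt2 = el (p - (i + 1)) :=
          (List.getD_eq_getElem L 1 hlt2).symm
        rw [e1, show p - (i + 1) + 1 = p - i by omega]
      have hr := hrecH (i + 1) (by omega) hi
      rw [Nat.add_sub_cancel] at hr
      rw [← mul_assoc, ← hr, mul_assoc, hstep]
  have G1 : ∀ i, 1 ≤ i → i ≤ p → IsHypercube (H' i) := fun i h1 h2 => (f6 i h1 h2).1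
  have G2 : IsHypercube (Y 0) := by
    rcases Nat.eq_zero_or_pos p with h0 | h1
    · have := hYp
      rw [h0] at this
      rw [this]; exact hy
    · rw [hrecY 1 (le_refl 1) h1]
      exact hmap_hc hspec _
  refine ⟨G1, G2, ?_⟩
  rcases Nat.eq_zero_or_pos p with hp0 | hp1
  · -- p = 0 : L = []
    have hY0 : Y 0 = y := by rw [hp0] at hYp; exact hYp
    have hLnil : L = [] := List.length_eq_zero_iff.mp hp0
    have ha1 : a = 1 := by rw [ha, hLnil, List.prod_nil]
    have hofn : (List.ofFn fun j : Fin p => H' (p - (j : ℕ))) = [] := by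
      rw [hp0]; simp
    rw [hofn, List.nil_append]
    by_cases hy1 : y = 1
    · have : List.filter (fun x => decide (x ≠ 1)) [Y 0] = [] := by
        simp [hY0, hy1]
      rw [this]
      refine ⟨⟨by simp, ?_⟩, by simp [ha1, hy1]⟩
      intro n hn
      simp at hn
    · have : List.filter (fun x => decide (x ≠ 1)) [Y 0] = [Y 0] := by
        simp [hY0, hy1]
      rw [this]
      constructor
      · constructor
        · intro x hx
          rw [List.mem_singleton] at hx
          subst hx
          exact ⟨G2, by rw [hY0]; exact hy1⟩
        · intro n hn
          simp only [List.length_singleton] at hn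
          interval_cases n
          simp only [List.take_succ, List.take_zero]
          rw [List.get_eq_getElem]
          simp only [List.nil_append]
          show hmap ([Y 0].take 1).prod = _
          rw [show ([Y 0].take 1) = [Y 0] from rfl, List.prod_singleton]
          exact hmap_eq_self hM hspec G2
      · rw [List.prod_singleton, hY0, ha1, mul_one]
  · -- p ≥ 1
    by_cases hHp : H' p = 1
    · -- drop the head
      obtain ⟨p', hp'⟩ : ∃ p', p = p' + 1 := ⟨p - 1, by omega⟩
      have hfun2 : (fun j : Fin p' => H' (p' + 1 - ((j : ℕ) + 1)))
          = (fun j : Fin p' => H' (p' - (j : ℕ))) := by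
        funext j; congr 1; omega
      have hsplit : (List.ofFn fun j : Fin p => H' (p - (j : ℕ)))
          = H' p :: List.ofFn fun j : Fin p' => H' (p' - (j : ℕ)) := by
        rw [hp', ofFn_shift p' (fun n => H' (p' + 1 - n)), Nat.sub_zero, hfun2]
      rw [hsplit, List.cons_append, List.filter_cons]
      have hdec : (decide (H' p ≠ 1)) = false := by
        simp [hHp]
      rw [hdec]
      simp only [Bool.false_eq_true, if_false]
      set U' : List M := (List.ofFn fun j : Fin p' => H' (p' - (j : ℕ))) ++ [Y 0] with hU'
      have hallne : ∀ x ∈ U', x ≠ 1 := by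
        intro x hx
        rw [hU', List.mem_append] at hx
        rcases hx with hx | hx
        · obtain ⟨j, hj⟩ := List.mem_ofFn.1 hx
          rw [← hj]
          exact f10 (p' - (j : ℕ)) (by omega) (by omega)
        · rw [List.mem_singleton] at hx
          rw [hx]
          exact f9 hp1
      have hfilter : List.filter (fun x => decide (x ≠ 1)) U' = U' := by
        rw [List.filter_eq_self]
        intro x hx
        exact decide_eq_true (hallne x hx)
      rw [hfilter]
      constructor
      · refine RNF_build hM hspec p' (fun n => H' (p' - n)) (Y 0) ?_ G2 (f9 hp1) ?_ ?_
        · intro j hj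
          exact ⟨G1 (p' - j) (by omega) (by omega), f10 (p' - j) (by omega) (by omega)⟩
        · intro j hj
          have := f7 (p' - (j + 1)) (by omega) (by omega)
          rwa [show p' - (j + 1) + 1 = p' - j by omega] at this
        · intro hk
          show hmap (H' (p' - (p' - 1)) * Y 0) = Y 0
          rw [show p' - (p' - 1) = 1 by omega]
          exact f8 hp1
      · rw [hU', List.prod_append, List.prod_singleton, f11 p' (by omega)]
        have h1 := hrecH p (by omega) (le_refl p)
        rw [show p - p = 0 by omega, hHp, one_mul] at h1
        have hpp : p - 1 = p' := by omega
        rw [hpp] at h1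
        have hlt0 : 0 < L.length := by omega
        have e0 : L[0]'hlt0 = el 0 := (List.getD_eq_getElem L 1 hlt0).symm
        have hL0 : L.prod = el 0 * (L.drop 1).prod := by
          have hcons : L = L[0]'hlt0 :: L.drop 1 := by
            have := List.drop_eq_getElem_cons (i := 0) (l := L) hlt0
            rwa [List.drop_zero] at this
          conv_lhs => rw [hcons]
          rw [List.prod_cons, e0]
        rw [show p - p' = 1 by omega, ha, hL0, ← h1, hYp, mul_assoc]
    · -- keep everything
      have hallne : ∀ x ∈ (List.ofFn fun j : Fin p => H' (p - (j : ℕ))) ++ [Y 0], x ≠ 1 := by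
        intro x hx
        rw [List.mem_append] at hx
        rcases hx with hx | hx
        · obtain ⟨j, hj⟩ := List.mem_ofFn.1 hx
          rw [← hj]
          show H' (p - (j : ℕ)) ≠ 1
          rcases Nat.eq_zero_or_pos (j : ℕ) with hj0 | hjpos
          · rw [hj0, Nat.sub_zero]; exact hHp
          · exact f10 (p - (j : ℕ)) (by omega) (by omega)
        · rw [List.mem_singleton] at hx
          rw [hx]
          exact f9 hp1
      have hfilter : List.filter (fun x => decide (x ≠ 1))
          ((List.ofFn fun j : Fin p => H' (p - (j : ℕ))) ++ [Y 0])
          = (List.ofFn fun j : Fin p => H' (p - (j : ℕ))) ++ [Y 0] := by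
        rw [List.filter_eq_self]
        intro x hx
        exact decide_eq_true (hallne x hx)
      rw [hfilter]
      constructor
      · refine RNF_build hM hspec p (fun n => H' (p - n)) (Y 0) ?_ G2 (f9 hp1) ?_ ?_
        · intro j hj
          refine ⟨G1 (p - j) (by omega) (by omega), ?_⟩
          show H' (p - j) ≠ 1
          rcases Nat.eq_zero_or_pos j with hj0 | hjpos
          · rw [hj0, Nat.sub_zero]; exact hHp
          · exact f10 (p - j) (by omega) (by omega)
        · intro j hj
          have := f7 (p - (j + 1)) (by omega) (by omega)
          rwa [show p - (j + 1) + 1 = p - j by omega] at this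
        · intro hk
          show hmap (H' (p - (p - 1)) * Y 0) = Y 0
          rw [show p - (p - 1) = 1 by omega]
          exact f8 hp1
      · rw [List.prod_append, List.prod_singleton, f11 p (le_refl p),
          show p - p = 0 by omega, List.drop_zero, hYp, ha]
end
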